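/- arXiv:2308.01625 — 8 statements merged into one kernel-verified Lean document; each statement's English description precedes it below -/
import Mathlib

section
/- Let E, I, K, I_ρ > 0 and l > 0 be real numbers, let ω be a real number, and let b : [0,l] → ℝ be continuous. Let u, v : [0,l] → ℂ be twice continuously differentiable functions with v(0) = v(l) = 0. If E·I·v''(x) + K·u'(x) − K·v(x) − i·b(x)·ω·v(x) = −I_ρ·ω²·v(x) for all x ∈ (0,l), then E·I·∫₀ˡ |v'(x)|² dx + K·∫₀ˡ u(x)·conj(v'(x)) dx + ∫₀ˡ (K − I_ρ·ω²)·|v(x)|² dx + i·ω·∫₀ˡ b(x)·|v(x)|² dx = 0 (as an identity of complex numbers). -/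
open MeasureTheory Set


/-- Identity (R19): multiplying the second Timoshenko eigen-equation by `conj v`
and integrating by parts using the Dirichlet boundary conditions on `v`. -/
theorem stmt_1 (E I K Iρ l ω : ℝ)
    (hE : 0 < E) (hI : 0 < I) (hK : 0 < K) (hIρ : 0 < Iρ) (hl : 0 < l)
    (b : ℝ → ℝ) (hb : ContinuousOn b (Set.Icc 0 l))
    (u v : ℝ → ℂ)
    (hu : ContDiffOn ℝ 2 u (Set.Icc 0 l))
    (hv : ContDiffOn ℝ 2 v (Set.Icc 0 l))
    (hv0 : v 0 = 0) (hvl : v l = 0)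
    (heq : ∀ x ∈ Set.Ioo (0 : ℝ) l,
      (E : ℂ) * (I : ℂ) * deriv (deriv v) x + (K : ℂ) * deriv u x - (K : ℂ) * v x
        - Complex.I * (b x : ℂ) * (ω : ℂ) * v x
        = -((Iρ : ℂ) * (ω : ℂ) ^ 2) * v x) :
    (E : ℂ) * (I : ℂ) * (∫ x in (0 : ℝ)..l, ((‖deriv v x‖ : ℂ)) ^ 2)
      + (K : ℂ) * (∫ x in (0 : ℝ)..l, u x * (starRingEnd ℂ) (deriv v x))
      + (∫ x in (0 : ℝ)..l, ((K : ℂ) - (Iρ : ℂ) * (ω : ℂ) ^ 2) * ((‖v x‖ : ℂ)) ^ 2)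
      + Complex.I * (ω : ℂ) * (∫ x in (0 : ℝ)..l, (b x : ℂ) * ((‖v x‖ : ℂ)) ^ 2) = 0 := by
  have hsu : UniqueDiffOn ℝ (Set.Icc (0:ℝ) l) := uniqueDiffOn_Icc hl
  set v1 : ℝ → ℂ := derivWithin v (Set.Icc 0 l) with hv1_def
  set v2 : ℝ → ℂ := derivWithin v1 (Set.Icc 0 l) with hv2_def
  set u1 : ℝ → ℂ := derivWithin u (Set.Icc 0 l) with hu1_def
  have hv1cd : ContDiffOn ℝ 1 v1 (Set.Icc 0 l) := hv.derivWithin hsu (by norm_num)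
  have hu1cd : ContDiffOn ℝ 1 u1 (Set.Icc 0 l) := hu.derivWithin hsu (by norm_num)
  have hv1c : ContinuousOn v1 (Set.Icc 0 l) := hv1cd.continuousOn
  have hv2c : ContinuousOn v2 (Set.Icc 0 l) := (ContDiffOn.derivWithin (m := 0) hv1cd hsu (by norm_num)).continuousOn
  have hu1c : ContinuousOn u1 (Set.Icc 0 l) := hu1cd.continuousOn
  have hvc : ContinuousOn v (Set.Icc 0 l) := hv.continuousOn
  have huc : ContinuousOn u (Set.Icc 0 l) := hu.continuousOn
  have hmem : ∀ x ∈ Set.Ioo (0:ℝ) l, Set.Icc (0:ℝ) l ∈ nhds x :=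
    fun x hx => Icc_mem_nhds hx.1 hx.2
  -- pointwise derivative facts on the interior
  have hveq : ∀ x ∈ Set.Ioo (0:ℝ) l, v1 x = deriv v x :=
    fun x hx => derivWithin_of_mem_nhds (hmem x hx)
  have hueq : ∀ x ∈ Set.Ioo (0:ℝ) l, u1 x = deriv u x :=
    fun x hx => derivWithin_of_mem_nhds (hmem x hx)
  have hvd : ∀ x ∈ Set.Ioo (0:ℝ) l, HasDerivAt v (v1 x) x := by
    intro x hx
    have h : DifferentiableAt ℝ v x :=
      ((hv.differentiableOn (by norm_num)) x (Set.Ioo_subset_Icc_self hx)).differentiableAt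
        (hmem x hx)
    exact (hveq x hx) ▸ h.hasDerivAt
  have hud : ∀ x ∈ Set.Ioo (0:ℝ) l, HasDerivAt u (u1 x) x := by
    intro x hx
    have h : DifferentiableAt ℝ u x :=
      ((hu.differentiableOn (by norm_num)) x (Set.Ioo_subset_Icc_self hx)).differentiableAt
        (hmem x hx)
    exact (hueq x hx) ▸ h.hasDerivAt
  have hv1d : ∀ x ∈ Set.Ioo (0:ℝ) l, HasDerivAt v1 (v2 x) x := by
    intro x hx
    have h : DifferentiableAt ℝ v1 x :=
      ((hv1cd.differentiableOn (by norm_num)) x (Set.Ioo_subset_Icc_self hx)).differentiableAt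
        (hmem x hx)
    have h2 : v2 x = deriv v1 x := derivWithin_of_mem_nhds (hmem x hx)
    exact h2 ▸ h.hasDerivAt
  have hv2eq : ∀ x ∈ Set.Ioo (0:ℝ) l, v2 x = deriv (deriv v) x := by
    intro x hx
    have h1 : v1 =ᶠ[nhds x] deriv v := by
      filter_upwards [Ioo_mem_nhds hx.1 hx.2] with y hy using hveq y hy
    have h2 : v2 x = deriv v1 x := derivWithin_of_mem_nhds (hmem x hx)
    rw [h2, h1.deriv_eq]
  -- conj derivative
  have hconjd : ∀ x ∈ Set.Ioo (0:ℝ) l,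
      HasDerivAt (fun y => (starRingEnd ℂ) (v y)) ((starRingEnd ℂ) (v1 x)) x := by
    intro x hx
    simpa only [starRingEnd_apply] using (hvd x hx).star
  -- the function for FTC
  set F : ℝ → ℂ := fun x => (E:ℂ) * I * (v1 x * (starRingEnd ℂ) (v x))
      + (K:ℂ) * (u x * (starRingEnd ℂ) (v x)) with hF_def
  set g : ℝ → ℂ := fun x => (E:ℂ) * I * (v2 x * (starRingEnd ℂ) (v x) + v1 x * (starRingEnd ℂ) (v1 x))
      + (K:ℂ) * (u1 x * (starRingEnd ℂ) (v x) + u x * (starRingEnd ℂ) (v1 x)) with hg_def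
  have hF : ∀ x ∈ Set.Ioo (0:ℝ) l, HasDerivAt F (g x) x := by
    intro x hx
    exact ((((hv1d x hx).mul (hconjd x hx)).const_mul ((E:ℂ)*I)).add
      (((hud x hx).mul (hconjd x hx)).const_mul (K:ℂ)))
  have hconjc : ContinuousOn (fun y => (starRingEnd ℂ) (v y)) (Set.Icc 0 l) :=
    Complex.continuous_conj.comp_continuousOn hvc
  have hconjc1 : ContinuousOn (fun y => (starRingEnd ℂ) (v1 y)) (Set.Icc 0 l) :=
    Complex.continuous_conj.comp_continuousOn hv1c
  have hFc : ContinuousOn F (Set.Icc 0 l) := by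
    apply ContinuousOn.add
    · exact continuousOn_const.mul (hv1c.mul hconjc)
    · exact continuousOn_const.mul (huc.mul hconjc)
  have hgc : ContinuousOn g (Set.Icc 0 l) := by
    apply ContinuousOn.add
    · exact continuousOn_const.mul ((hv2c.mul hconjc).add (hv1c.mul hconjc1))
    · exact continuousOn_const.mul ((hu1c.mul hconjc).add (huc.mul hconjc1))
  have hgi : IntervalIntegrable g volume 0 l := hgc.intervalIntegrable_of_Icc hl.le
  have hftc : ∫ x in (0:ℝ)..l, g x = F l - F 0 :=
    intervalIntegral.integral_eq_sub_of_hasDeriv_right_of_le hl.le hFc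
      (fun x hx => (hF x hx).hasDerivWithinAt) hgi
  have hgzero : ∫ x in (0:ℝ)..l, g x = 0 := by
    rw [hftc, hF_def]; simp [hv0, hvl]
  -- norm-square identity
  have hns : ∀ z : ℂ, z * (starRingEnd ℂ) z = ((‖z‖ : ℂ)) ^ 2 := by
    intro z
    rw [Complex.mul_conj]
    norm_cast
    rw [Complex.normSq_eq_norm_sq]
  -- a.e. congruence helper
  have hae : ∀ (f₁ f₂ : ℝ → ℂ), (∀ x ∈ Set.Ioo (0:ℝ) l, f₁ x = f₂ x) →
      ∫ x in (0:ℝ)..l, f₁ x = ∫ x in (0:ℝ)..l, f₂ x := by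
    intro f₁ f₂ h
    apply intervalIntegral.integral_congr_ae
    have hne : ∀ᵐ x : ℝ ∂volume, x ≠ l := by
      simp [ae_iff, measure_singleton]
    filter_upwards [hne] with x hx hmem'
    rw [Set.uIoc_of_le hl.le] at hmem'
    exact h x ⟨hmem'.1, lt_of_le_of_ne hmem'.2 hx⟩
  -- replace deriv with derivWithin in the goal integrals
  have e1 : (∫ x in (0:ℝ)..l, ((‖deriv v x‖ : ℂ)) ^ 2)
      = ∫ x in (0:ℝ)..l, ((‖v1 x‖ : ℂ)) ^ 2 := by
    apply hae; intro x hx; rw [hveq x hx]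
  have e2 : (∫ x in (0:ℝ)..l, u x * (starRingEnd ℂ) (deriv v x))
      = ∫ x in (0:ℝ)..l, u x * (starRingEnd ℂ) (v1 x) := by
    apply hae; intro x hx; rw [hveq x hx]
  rw [e1, e2, intervalIntegral.integral_const_mul]
  -- the combined integrand
  have hT : ∫ x in (0:ℝ)..l, ((E:ℂ) * I * ((‖v1 x‖ : ℂ))^2
      + (K:ℂ) * (u x * (starRingEnd ℂ) (v1 x))
      + ((K:ℂ) - (Iρ:ℂ) * (ω:ℂ)^2) * ((‖v x‖ : ℂ))^2
      + Complex.I * (ω:ℂ) * ((b x : ℂ) * ((‖v x‖ : ℂ))^2)) = 0 := by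
    rw [← hgzero]
    apply hae
    intro x hx
    have he := heq x hx
    rw [← hv2eq x hx, ← hueq x hx] at he
    have hEI : (E:ℂ) * I * v2 x = -((Iρ:ℂ) * (ω:ℂ)^2) * v x - (K:ℂ) * u1 x + (K:ℂ) * v x
        + Complex.I * (b x : ℂ) * (ω:ℂ) * v x := by linear_combination he
    rw [hg_def]
    simp only
    rw [← hns (v1 x), ← hns (v x)]
    linear_combination (-((starRingEnd ℂ) (v x))) * hEI
  -- split the combined integral
  have i1 : IntervalIntegrable (fun x => (E:ℂ) * I * ((‖v1 x‖ : ℂ))^2) volume 0 l := by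
    apply ContinuousOn.intervalIntegrable_of_Icc hl.le
    exact continuousOn_const.mul (((Complex.continuous_ofReal.comp continuous_norm).comp_continuousOn hv1c).pow 2)
  have i2 : IntervalIntegrable (fun x => (K:ℂ) * (u x * (starRingEnd ℂ) (v1 x))) volume 0 l := by
    apply ContinuousOn.intervalIntegrable_of_Icc hl.le
    exact continuousOn_const.mul (huc.mul hconjc1)
  have i3 : IntervalIntegrable (fun x => ((K:ℂ) - (Iρ:ℂ) * (ω:ℂ)^2) * ((‖v x‖ : ℂ))^2) volume 0 l := by
    apply ContinuousOn.intervalIntegrable_of_Icc hl.le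
    exact continuousOn_const.mul (((Complex.continuous_ofReal.comp continuous_norm).comp_continuousOn hvc).pow 2)
  have i4 : IntervalIntegrable (fun x => Complex.I * (ω:ℂ) * ((b x : ℂ) * ((‖v x‖ : ℂ))^2)) volume 0 l := by
    apply ContinuousOn.intervalIntegrable_of_Icc hl.le
    exact continuousOn_const.mul ((Complex.continuous_ofReal.comp_continuousOn hb).mul
      (((Complex.continuous_ofReal.comp continuous_norm).comp_continuousOn hvc).pow 2))
  rw [intervalIntegral.integral_add ((i1.add i2).add i3) i4,
      intervalIntegral.integral_add (i1.add i2) i3,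
      intervalIntegral.integral_add i1 i2,
      intervalIntegral.integral_const_mul, intervalIntegral.integral_const_mul,
      intervalIntegral.integral_const_mul, intervalIntegral.integral_const_mul] at hT
  exact hT
end

section
/- Let ρ, K, I_ρ, E, I > 0 and l > 0 be real numbers, let ω be a nonzero real number, and let b : [0,l] → ℝ be a continuous nonnegative function for which there exist 0 ≤ b₀ < b₁ ≤ l and b̄ > 0 with b(x) ≥ b̄ for all x ∈ [b₀,b₁]. Let u, v : [0,l] → ℂ be twice continuously differentiable with u(0) = u(l) = v(0) = v(l) = 0, and suppose that on (0,l): K·u'' − K·v' = −ρ·ω²·u and E·I·v'' + K·u' − K·v − i·b·ω·v = −I_ρ·ω²·v. Then u(x) = 0 and v(x) = 0 for all x ∈ (b₀,b₁). -/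
open Set Complex Filter

/-- System (2.6): an eigenvector of the damped Timoshenko operator associated with
a purely imaginary eigenvalue vanishes on the damped subinterval `(b₀, b₁)`. -/
theorem stmt_3 (ρ K Iρ E I l ω : ℝ)
    (hρ : 0 < ρ) (hK : 0 < K) (hIρ : 0 < Iρ) (hE : 0 < E) (hI : 0 < I) (hl : 0 < l)
    (hω : ω ≠ 0)
    (b : ℝ → ℝ) (hb : ContinuousOn b (Set.Icc 0 l))
    (hbnonneg : ∀ x ∈ Set.Icc (0 : ℝ) l, 0 ≤ b x)
    (b₀ b₁ bbar : ℝ) (hb₀ : 0 ≤ b₀) (hb₀₁ : b₀ < b₁) (hb₁ : b₁ ≤ l) (hbbar : 0 < bbar)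
    (hblower : ∀ x ∈ Set.Icc b₀ b₁, bbar ≤ b x)
    (u v : ℝ → ℂ)
    (hu : ContDiffOn ℝ 2 u (Set.Icc 0 l))
    (hv : ContDiffOn ℝ 2 v (Set.Icc 0 l))
    (hu0 : u 0 = 0) (hul : u l = 0) (hv0 : v 0 = 0) (hvl : v l = 0)
    (heq1 : ∀ x ∈ Set.Ioo (0 : ℝ) l,
      (K : ℂ) * deriv (deriv u) x - (K : ℂ) * deriv v x
        = -((ρ : ℂ) * (ω : ℂ) ^ 2) * u x)
    (heq2 : ∀ x ∈ Set.Ioo (0 : ℝ) l,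
      (E : ℂ) * (I : ℂ) * deriv (deriv v) x + (K : ℂ) * deriv u x - (K : ℂ) * v x
        - Complex.I * (b x : ℂ) * (ω : ℂ) * v x
        = -((Iρ : ℂ) * (ω : ℂ) ^ 2) * v x) :
    ∀ x ∈ Set.Ioo b₀ b₁, u x = 0 ∧ v x = 0 := by
  have hsub : Ioo b₀ b₁ ⊆ Ioo 0 l := fun x hx =>
    ⟨lt_of_le_of_lt hb₀ hx.1, lt_of_lt_of_le hx.2 hb₁⟩
  have hsU : UniqueDiffOn ℝ (Icc (0:ℝ) l) := uniqueDiffOn_Icc hl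
  set s := Icc (0:ℝ) l with hs
  set u₁ := derivWithin u s with hu₁def
  set v₁ := derivWithin v s with hv₁def
  -- basic differentiability facts on the open interval
  have h21 : (2 : WithTop ℕ∞) = 1 + 1 := by norm_num
  have huo : ContDiffOn ℝ 2 u (Ioo 0 l) := hu.mono Ioo_subset_Icc_self
  have hvo : ContDiffOn ℝ 2 v (Ioo 0 l) := hv.mono Ioo_subset_Icc_self
  have huod : DifferentiableOn ℝ u (Ioo 0 l) ∧ ContDiffOn ℝ 1 (deriv u) (Ioo 0 l) := by
    rw [h21] at huo
    have := (contDiffOn_succ_iff_deriv_of_isOpen isOpen_Ioo).1 huo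
    exact ⟨this.1, this.2.2⟩
  have hvod : DifferentiableOn ℝ v (Ioo 0 l) ∧ ContDiffOn ℝ 1 (deriv v) (Ioo 0 l) := by
    rw [h21] at hvo
    have := (contDiffOn_succ_iff_deriv_of_isOpen isOpen_Ioo).1 hvo
    exact ⟨this.1, this.2.2⟩
  have hasU : ∀ x ∈ Ioo (0:ℝ) l, HasDerivAt u (deriv u x) x := fun x hx =>
    ((huod.1 x hx).differentiableAt (isOpen_Ioo.mem_nhds hx)).hasDerivAt
  have hasV : ∀ x ∈ Ioo (0:ℝ) l, HasDerivAt v (deriv v x) x := fun x hx =>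
    ((hvod.1 x hx).differentiableAt (isOpen_Ioo.mem_nhds hx)).hasDerivAt
  have hasU' : ∀ x ∈ Ioo (0:ℝ) l, HasDerivAt (deriv u) (deriv (deriv u) x) x := fun x hx =>
    (((huod.2.differentiableOn one_ne_zero) x hx).differentiableAt
      (isOpen_Ioo.mem_nhds hx)).hasDerivAt
  have hasV' : ∀ x ∈ Ioo (0:ℝ) l, HasDerivAt (deriv v) (deriv (deriv v) x) x := fun x hx =>
    (((hvod.2.differentiableOn one_ne_zero) x hx).differentiableAt
      (isOpen_Ioo.mem_nhds hx)).hasDerivAt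
  have hu₁eq : ∀ x ∈ Ioo (0:ℝ) l, u₁ x = deriv u x := fun x hx =>
    derivWithin_of_mem_nhds (Icc_mem_nhds hx.1 hx.2)
  have hv₁eq : ∀ x ∈ Ioo (0:ℝ) l, v₁ x = deriv v x := fun x hx =>
    derivWithin_of_mem_nhds (Icc_mem_nhds hx.1 hx.2)
  -- the energy flux function
  set G : ℝ → ℝ := fun x => ω * ((K : ℂ) * (u₁ x * (starRingEnd ℂ) (u x))
      + (E : ℂ) * (I : ℂ) * (v₁ x * (starRingEnd ℂ) (v x))
      + (K : ℂ) * (u x * (starRingEnd ℂ) (v x))).im with hGdef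
  -- G has derivative ω² b |v|² on the interior
  have hG' : ∀ x ∈ Ioo (0:ℝ) l, HasDerivAt G (ω ^ 2 * b x * Complex.normSq (v x)) x := by
    intro x hx
    have hU := hasU x hx
    have hV := hasV x hx
    have hU2 := hasU' x hx
    have hV2 := hasV' x hx
    have hu₁near : u₁ =ᶠ[nhds x] deriv u :=
      eventually_of_mem (isOpen_Ioo.mem_nhds hx) (fun y hy => hu₁eq y hy)
    have hv₁near : v₁ =ᶠ[nhds x] deriv v :=
      eventually_of_mem (isOpen_Ioo.mem_nhds hx) (fun y hy => hv₁eq y hy)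
    have hU1 : HasDerivAt u₁ (deriv (deriv u) x) x := hU2.congr_of_eventuallyEq hu₁near
    have hV1 : HasDerivAt v₁ (deriv (deriv v) x) x := hV2.congr_of_eventuallyEq hv₁near
    have hUc : HasDerivAt (fun y => (starRingEnd ℂ) (u y)) ((starRingEnd ℂ) (deriv u x)) x :=
      (Complex.conjCLE.hasFDerivAt.comp_hasDerivAt x hU :)
    have hVc : HasDerivAt (fun y => (starRingEnd ℂ) (v y)) ((starRingEnd ℂ) (deriv v x)) x :=
      (Complex.conjCLE.hasFDerivAt.comp_hasDerivAt x hV :)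
    -- derivative of the complex expression
    have hF : HasDerivAt (fun y => (K : ℂ) * (u₁ y * (starRingEnd ℂ) (u y))
        + (E : ℂ) * (I : ℂ) * (v₁ y * (starRingEnd ℂ) (v y))
        + (K : ℂ) * (u y * (starRingEnd ℂ) (v y)))
        ((K : ℂ) * (deriv (deriv u) x * (starRingEnd ℂ) (u x)
            + u₁ x * (starRingEnd ℂ) (deriv u x))
          + (E : ℂ) * (I : ℂ) * (deriv (deriv v) x * (starRingEnd ℂ) (v x)
            + v₁ x * (starRingEnd ℂ) (deriv v x))
          + (K : ℂ) * (deriv u x * (starRingEnd ℂ) (v x)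
            + u x * (starRingEnd ℂ) (deriv v x))) x := by
      exact (((hU1.mul hUc).const_mul _).add ((hV1.mul hVc).const_mul _)).add
        ((hU.mul hVc).const_mul _)
    have hGd : HasDerivAt G (ω * ((K : ℂ) * (deriv (deriv u) x * (starRingEnd ℂ) (u x)
            + u₁ x * (starRingEnd ℂ) (deriv u x))
          + (E : ℂ) * (I : ℂ) * (deriv (deriv v) x * (starRingEnd ℂ) (v x)
            + v₁ x * (starRingEnd ℂ) (deriv v x))
          + (K : ℂ) * (deriv u x * (starRingEnd ℂ) (v x)
            + u x * (starRingEnd ℂ) (deriv v x))).im) x := by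
      exact (Complex.imCLM.hasFDerivAt.comp_hasDerivAt x hF).const_mul ω
    convert hGd using 1
    -- now the algebraic identity using the two equations
    have e1 := heq1 x hx
    have e2 := heq2 x hx
    rw [hu₁eq x hx, hv₁eq x hx]
    set U := u x; set V := v x; set U1 := deriv u x; set V1 := deriv v x
    set U2 := deriv (deriv u) x; set V2 := deriv (deriv v) x
    rw [Complex.ext_iff] at e1 e2
    obtain ⟨e1r, e1i⟩ := e1
    obtain ⟨e2r, e2i⟩ := e2
    simp only [Complex.mul_re, Complex.mul_im, Complex.add_re, Complex.add_im,
      Complex.sub_re, Complex.sub_im, Complex.neg_re, Complex.neg_im,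
      Complex.ofReal_re, Complex.ofReal_im, Complex.I_re, Complex.I_im,
      Complex.conj_re, Complex.conj_im, Complex.normSq_apply,
      pow_two] at e1r e1i e2r e2i ⊢
    linear_combination (norm := ring_nf)
      (ω * U.im) * e1r - (ω * U.re) * e1i + (ω * V.im) * e2r - (ω * V.re) * e2i
  -- G is continuous on [0, l]
  have hu₁c : ContinuousOn u₁ s := hu.continuousOn_derivWithin hsU (by norm_num)
  have hv₁c : ContinuousOn v₁ s := hv.continuousOn_derivWithin hsU (by norm_num)
  have hGc : ContinuousOn G s := by
    apply continuousOn_const.mul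
    apply Complex.continuous_im.comp_continuousOn
    exact ((continuousOn_const.mul (hu₁c.mul (Complex.continuous_conj.comp_continuousOn
        hu.continuousOn))).add
      (continuousOn_const.mul (hv₁c.mul (Complex.continuous_conj.comp_continuousOn
        hv.continuousOn)))).add
      (continuousOn_const.mul (hu.continuousOn.mul (Complex.continuous_conj.comp_continuousOn
        hv.continuousOn)))
  -- boundary values
  have hG0 : G 0 = 0 := by simp [hGdef, hu0, hv0]
  have hGl : G l = 0 := by simp [hGdef, hul, hvl]
  -- monotonicity
  have hmono : MonotoneOn G s := by
    apply monotoneOn_of_deriv_nonneg (convex_Icc 0 l) hGc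
    · rw [interior_Icc]
      exact fun x hx => ((hG' x hx).differentiableAt).differentiableWithinAt
    · rw [interior_Icc]
      intro x hx
      rw [(hG' x hx).deriv]
      have hb0 : 0 ≤ b x := hbnonneg x (Ioo_subset_Icc_self hx)
      exact mul_nonneg (mul_nonneg (sq_nonneg ω) hb0) (Complex.normSq_nonneg _)
  -- G vanishes identically
  have hGzero : ∀ x ∈ s, G x = 0 := by
    intro x hx
    have h1 : G 0 ≤ G x := hmono (by simp [hs]; exact hl.le) hx hx.1
    have h2 : G x ≤ G l := hmono hx (by simp [hs]; exact hl.le) hx.2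
    rw [hG0] at h1; rw [hGl] at h2
    linarith
  -- v vanishes on (b₀, b₁)
  have hvz : ∀ x ∈ Ioo b₀ b₁, v x = 0 := by
    intro x hx
    have hx' : x ∈ Ioo (0:ℝ) l := hsub hx
    have hGnear : G =ᶠ[nhds x] (fun _ => (0:ℝ)) :=
      eventually_of_mem (isOpen_Ioo.mem_nhds hx')
        (fun y hy => hGzero y (Ioo_subset_Icc_self hy))
    have h0 : HasDerivAt (fun _ : ℝ => (0:ℝ)) (ω ^ 2 * b x * Complex.normSq (v x)) x :=
      (hG' x hx').congr_of_eventuallyEq hGnear.symm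
    have heq0 := h0.unique (hasDerivAt_const x 0)
    have hbx : 0 < b x := lt_of_lt_of_le hbbar (hblower x (Ioo_subset_Icc_self hx))
    have hω2 : 0 < ω ^ 2 * b x := by positivity
    have hns : Complex.normSq (v x) = 0 := by
      rcases mul_eq_zero.mp heq0 with h | h
      · exact absurd h hω2.ne'
      · exact h
    exact Complex.normSq_eq_zero.mp hns
  -- derivatives of v vanish on (b₀, b₁)
  have hvz' : ∀ x ∈ Ioo b₀ b₁, deriv v x = 0 := by
    intro x hx
    have : v =ᶠ[nhds x] (fun _ => (0:ℂ)) :=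
      eventually_of_mem (isOpen_Ioo.mem_nhds hx) (fun y hy => hvz y hy)
    rw [this.deriv_eq, deriv_const]
  have hvz'' : ∀ x ∈ Ioo b₀ b₁, deriv (deriv v) x = 0 := by
    intro x hx
    have : deriv v =ᶠ[nhds x] (fun _ => (0:ℂ)) :=
      eventually_of_mem (isOpen_Ioo.mem_nhds hx) (fun y hy => hvz' y hy)
    rw [this.deriv_eq, deriv_const]
  have hKne : (K : ℂ) ≠ 0 := Complex.ofReal_ne_zero.mpr hK.ne'
  -- u' vanishes on (b₀, b₁)
  have huz' : ∀ x ∈ Ioo b₀ b₁, deriv u x = 0 := by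
    intro x hx
    have e2 := heq2 x (hsub hx)
    rw [hvz x hx, hvz'' x hx] at e2
    simp only [mul_zero, add_zero, sub_zero, zero_add] at e2
    exact (mul_eq_zero.mp e2).resolve_left hKne
  have huz'' : ∀ x ∈ Ioo b₀ b₁, deriv (deriv u) x = 0 := by
    intro x hx
    have : deriv u =ᶠ[nhds x] (fun _ => (0:ℂ)) :=
      eventually_of_mem (isOpen_Ioo.mem_nhds hx) (fun y hy => huz' y hy)
    rw [this.deriv_eq, deriv_const]
  -- conclude
  intro x hx
  refine ⟨?_, hvz x hx⟩
  have e1 := heq1 x (hsub hx)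
  rw [huz'' x hx, hvz' x hx] at e1
  simp only [mul_zero, sub_zero] at e1
  have hne : -((ρ : ℂ) * (ω : ℂ) ^ 2) ≠ 0 := by
    simp only [ne_eq, neg_eq_zero, mul_eq_zero, not_or]
    constructor
    · exact Complex.ofReal_ne_zero.mpr hρ.ne'
    · exact pow_ne_zero 2 (Complex.ofReal_ne_zero.mpr hω)
  exact (mul_eq_zero.mp e1.symm).resolve_left hne
end

section
/- Let ρ, K, I_ρ, E, I > 0 and l > 0 be real numbers, let ω be a nonzero real number, and let b : [0,l] → ℝ be a continuous nonnegative function for which there exist 0 ≤ b₀ < b₁ ≤ l and b̄ > 0 with b(x) ≥ b̄ for all x ∈ [b₀,b₁]. Let u, v : [0,l] → ℂ be twice continuously differentiable with u(0) = u(l) = v(0) = v(l) = 0, and suppose that on (0,l): K·u'' − K·v' = −ρ·ω²·u and E·I·v'' + K·u' − K·v − i·b·ω·v = −I_ρ·ω²·v. Then u(x) = 0 and v(x) = 0 for all x ∈ [0,l]. -/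
open Set

private lemma reg_aux {l : ℝ} {f : ℝ → ℂ} (hf : ContDiffOn ℝ 2 f (Set.Icc 0 l))
    {x : ℝ} (hx : x ∈ Set.Ioo 0 l) :
    HasDerivAt f (deriv f x) x ∧ HasDerivAt (deriv f) (deriv (deriv f) x) x := by
  constructor
  · exact ((hf.differentiableOn (by norm_num)).differentiableAt
      (Icc_mem_nhds hx.1 hx.2)).hasDerivAt
  · have h2 : ContDiffOn ℝ 1 (deriv f) (Set.Ioo 0 l) :=
      (hf.mono Ioo_subset_Icc_self).deriv_of_isOpen isOpen_Ioo (by norm_num)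
    exact ((h2.differentiableOn (by norm_num)).differentiableAt
      (isOpen_Ioo.mem_nhds hx)).hasDerivAt

private lemma core_id (Kr Er Ir ρr Iρr ω bx : ℝ) (a da c dc dda ddc : ℂ)
    (e1 : (Kr:ℂ) * dda - (Kr:ℂ) * dc = -((ρr:ℂ) * (ω:ℂ)^2) * a)
    (e2 : (Er:ℂ)*(Ir:ℂ)*ddc + (Kr:ℂ)*da - (Kr:ℂ)*c - Complex.I*(bx:ℂ)*(ω:ℂ)*c
      = -((Iρr:ℂ)*(ω:ℂ)^2)*c) :
    ((Kr:ℂ)*dda*star a + (Kr:ℂ)*da*star da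
      + ((Er:ℂ)*(Ir:ℂ)*ddc*star c + (Er:ℂ)*(Ir:ℂ)*dc*star dc)
      + ((Kr:ℂ)*da*star c + (Kr:ℂ)*a*star dc)).im = ω * bx * Complex.normSq c := by
  have e1re := congrArg Complex.re e1
  have e1im := congrArg Complex.im e1
  have e2re := congrArg Complex.re e2
  have e2im := congrArg Complex.im e2
  simp only [Complex.add_re, Complex.add_im, Complex.sub_re, Complex.sub_im,
    Complex.mul_re, Complex.mul_im, Complex.neg_re, Complex.neg_im,
    Complex.ofReal_re, Complex.ofReal_im, Complex.I_re, Complex.I_im,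
    Complex.normSq_apply, RCLike.star_def, Complex.conj_re, Complex.conj_im,
    pow_two] at *
  linear_combination (-(a.im)) * e1re + a.re * e1im + (-(c.im)) * e2re + c.re * e2im

/-- System (2.6): an eigenvector of the damped Timoshenko operator associated with
a purely imaginary eigenvalue vanishes identically: no purely imaginary eigenvalues. -/
theorem stmt_4 (ρ K Iρ E I l ω : ℝ)
    (hρ : 0 < ρ) (hK : 0 < K) (hIρ : 0 < Iρ) (hE : 0 < E) (hI : 0 < I) (hl : 0 < l)
    (hω : ω ≠ 0)
    (b : ℝ → ℝ) (hb : ContinuousOn b (Set.Icc 0 l))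
    (hbnonneg : ∀ x ∈ Set.Icc (0 : ℝ) l, 0 ≤ b x)
    (b₀ b₁ bbar : ℝ) (hb₀ : 0 ≤ b₀) (hb₀₁ : b₀ < b₁) (hb₁ : b₁ ≤ l) (hbbar : 0 < bbar)
    (hblower : ∀ x ∈ Set.Icc b₀ b₁, bbar ≤ b x)
    (u v : ℝ → ℂ)
    (hu : ContDiffOn ℝ 2 u (Set.Icc 0 l))
    (hv : ContDiffOn ℝ 2 v (Set.Icc 0 l))
    (hu0 : u 0 = 0) (hul : u l = 0) (hv0 : v 0 = 0) (hvl : v l = 0)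
    (heq1 : ∀ x ∈ Set.Ioo (0 : ℝ) l,
      (K : ℂ) * deriv (deriv u) x - (K : ℂ) * deriv v x
        = -((ρ : ℂ) * (ω : ℂ) ^ 2) * u x)
    (heq2 : ∀ x ∈ Set.Ioo (0 : ℝ) l,
      (E : ℂ) * (I : ℂ) * deriv (deriv v) x + (K : ℂ) * deriv u x - (K : ℂ) * v x
        - Complex.I * (b x : ℂ) * (ω : ℂ) * v x
        = -((Iρ : ℂ) * (ω : ℂ) ^ 2) * v x) :
    ∀ x ∈ Set.Icc (0 : ℝ) l, u x = 0 ∧ v x = 0 := by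
  have hKc : (K : ℂ) ≠ 0 := Complex.ofReal_ne_zero.2 hK.ne'
  have hEIc : (E : ℂ) * (I : ℂ) ≠ 0 :=
    mul_ne_zero (Complex.ofReal_ne_zero.2 hE.ne') (Complex.ofReal_ne_zero.2 hI.ne')
  -- sign
  set σ : ℝ := if 0 < ω then 1 else -1 with hσdef
  have hσω : 0 < σ * ω := by
    rcases lt_or_ge 0 ω with h | h
    · simp [hσdef, h]
    · have h' : ω < 0 := lt_of_le_of_ne h hω
      simp only [hσdef, not_lt.2 h, if_false]
      nlinarith
  -- the flux function
  set F : ℝ → ℝ := fun x => σ * ((K : ℂ) * derivWithin u (Set.Icc 0 l) x * star (u x)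
      + (E : ℂ) * (I : ℂ) * derivWithin v (Set.Icc 0 l) x * star (v x)
      + (K : ℂ) * u x * star (v x)).im with hFdef
  have hFc : ContinuousOn F (Set.Icc 0 l) := by
    have h1 : ContinuousOn (derivWithin u (Set.Icc 0 l)) (Set.Icc 0 l) :=
      hu.continuousOn_derivWithin (uniqueDiffOn_Icc hl) (by norm_num)
    have h2 : ContinuousOn (derivWithin v (Set.Icc 0 l)) (Set.Icc 0 l) :=
      hv.continuousOn_derivWithin (uniqueDiffOn_Icc hl) (by norm_num)
    have hcu := hu.continuousOn
    have hcv := hv.continuousOn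
    apply continuousOn_const.mul
    exact Complex.continuous_im.comp_continuousOn
      ((((continuousOn_const.mul h1).mul hcu.star).add
        ((continuousOn_const.mul h2).mul hcv.star)).add
        ((continuousOn_const.mul hcu).mul hcv.star))
  have hF' : ∀ x ∈ Set.Ioo (0:ℝ) l,
      HasDerivAt F (σ * (ω * b x * Complex.normSq (v x))) x := by
    intro x hx
    obtain ⟨hu1, hu2⟩ := reg_aux hu hx
    obtain ⟨hv1, hv2⟩ := reg_aux hv hx
    have hgo : HasDerivAt (fun y => σ * ((K : ℂ) * deriv u y * star (u y)
        + (E : ℂ) * (I : ℂ) * deriv v y * star (v y)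
        + (K : ℂ) * u y * star (v y)).im)
        (σ * (ω * b x * Complex.normSq (v x))) x := by
      have hprod : HasDerivAt (fun y => (K : ℂ) * deriv u y * star (u y)
          + (E : ℂ) * (I : ℂ) * deriv v y * star (v y)
          + (K : ℂ) * u y * star (v y))
          ((K : ℂ) * deriv (deriv u) x * star (u x)
            + (K : ℂ) * deriv u x * star (deriv u x)
            + ((E : ℂ) * (I : ℂ) * deriv (deriv v) x * star (v x)
              + (E : ℂ) * (I : ℂ) * deriv v x * star (deriv v x))
            + ((K : ℂ) * deriv u x * star (v x) + (K : ℂ) * u x * star (deriv v x))) x := by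
        have p1 := ((hu2.const_mul (K : ℂ)).mul hu1.star)
        have p2 := ((hv2.const_mul ((E : ℂ) * (I : ℂ))).mul hv1.star)
        have p3 := ((hu1.const_mul (K : ℂ)).mul hv1.star)
        convert (p1.add p2).add p3 using 1
        all_goals rfl
      have him := (Complex.imCLM.hasFDerivAt.comp_hasDerivAt x hprod).const_mul σ
      have hid := core_id K E I ρ Iρ ω (b x) (u x) (deriv u x) (v x) (deriv v x)
        (deriv (deriv u) x) (deriv (deriv v) x) (heq1 x hx) (heq2 x hx)
      rw [Complex.imCLM_apply, hid] at him
      exact him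
    have hev : F =ᶠ[nhds x] (fun y => σ * ((K : ℂ) * deriv u y * star (u y)
        + (E : ℂ) * (I : ℂ) * deriv v y * star (v y)
        + (K : ℂ) * u y * star (v y)).im) := by
      filter_upwards [isOpen_Ioo.mem_nhds hx] with y hy
      rw [hFdef]
      simp only
      rw [derivWithin_of_mem_nhds (Icc_mem_nhds hy.1 hy.2),
        derivWithin_of_mem_nhds (Icc_mem_nhds hy.1 hy.2)]
    exact hgo.congr_of_eventuallyEq hev
  -- monotonicity and vanishing of F
  have hmono : MonotoneOn F (Set.Icc 0 l) := by
    apply monotoneOn_of_deriv_nonneg (convex_Icc 0 l) hFc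
    · rw [interior_Icc]
      exact fun x hx => ((hF' x hx).differentiableAt).differentiableWithinAt
    · rw [interior_Icc]
      intro x hx
      rw [(hF' x hx).deriv]
      have h1 : 0 ≤ b x := hbnonneg x (Ioo_subset_Icc_self hx)
      have h2 : 0 ≤ Complex.normSq (v x) := Complex.normSq_nonneg _
      have h3 : 0 ≤ σ * ω * (b x * Complex.normSq (v x)) :=
        mul_nonneg hσω.le (mul_nonneg h1 h2)
      nlinarith [h3]
  have hF0 : F 0 = 0 := by simp [hFdef, hu0, hv0]
  have hFl : F l = 0 := by simp [hFdef, hul, hvl]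
  have hFzero : ∀ x ∈ Set.Icc 0 l, F x = 0 := by
    intro x hx
    have h1 := hmono (left_mem_Icc.2 hl.le) hx hx.1
    have h2 := hmono hx (right_mem_Icc.2 hl.le) hx.2
    rw [hF0] at h1; rw [hFl] at h2; linarith
  have hderiv0 : ∀ x ∈ Set.Ioo (0:ℝ) l, σ * (ω * b x * Complex.normSq (v x)) = 0 := by
    intro x hx
    have hev : F =ᶠ[nhds x] fun _ => (0:ℝ) := by
      filter_upwards [isOpen_Ioo.mem_nhds hx] with y hy
      exact hFzero y (Ioo_subset_Icc_self hy)
    have := (hF' x hx).deriv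
    rw [Filter.EventuallyEq.deriv_eq hev, deriv_const] at this
    exact this.symm
  have hsub : Set.Ioo b₀ b₁ ⊆ Set.Ioo 0 l := fun x hx =>
    ⟨lt_of_le_of_lt hb₀ hx.1, lt_of_lt_of_le hx.2 hb₁⟩
  -- v = 0 on Ioo b₀ b₁
  have hvz : ∀ x ∈ Set.Ioo b₀ b₁, v x = 0 := by
    intro x hx
    have h0 := hderiv0 x (hsub hx)
    have hbx : 0 < b x := lt_of_lt_of_le hbbar (hblower x (Ioo_subset_Icc_self hx))
    have : Complex.normSq (v x) = 0 := by
      by_contra hne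
      have hpos : 0 < Complex.normSq (v x) :=
        lt_of_le_of_ne (Complex.normSq_nonneg _) (Ne.symm hne)
      nlinarith [mul_pos (mul_pos hσω hbx) hpos]
    exact Complex.normSq_eq_zero.1 this
  have hdvz : ∀ x ∈ Set.Ioo b₀ b₁, deriv v x = 0 := by
    intro x hx
    have hev : v =ᶠ[nhds x] fun _ => (0:ℂ) := by
      filter_upwards [isOpen_Ioo.mem_nhds hx] with y hy using hvz y hy
    rw [Filter.EventuallyEq.deriv_eq hev, deriv_const]
  have hddvz : ∀ x ∈ Set.Ioo b₀ b₁, deriv (deriv v) x = 0 := by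
    intro x hx
    have hev : deriv v =ᶠ[nhds x] fun _ => (0:ℂ) := by
      filter_upwards [isOpen_Ioo.mem_nhds hx] with y hy using hdvz y hy
    rw [Filter.EventuallyEq.deriv_eq hev, deriv_const]
  have hduz : ∀ x ∈ Set.Ioo b₀ b₁, deriv u x = 0 := by
    intro x hx
    have h2 := heq2 x (hsub hx)
    rw [hvz x hx, hddvz x hx] at h2
    simp only [mul_zero, zero_add, sub_zero, add_zero] at h2
    exact (mul_eq_zero.1 h2).resolve_left hKc
  -- midpoint
  set c := (b₀ + b₁)/2 with hcdef
  have hcmem : c ∈ Set.Ioo b₀ b₁ := ⟨by rw [hcdef]; linarith, by rw [hcdef]; linarith⟩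
  have hdduz : deriv (deriv u) c = 0 := by
    have hev : deriv u =ᶠ[nhds c] fun _ => (0:ℂ) := by
      filter_upwards [isOpen_Ioo.mem_nhds hcmem] with y hy using hduz y hy
    rw [Filter.EventuallyEq.deriv_eq hev, deriv_const]
  have huz : u c = 0 := by
    have h1 := heq1 c (hsub hcmem)
    rw [hdduz, hdvz c hcmem] at h1
    have hcoef : -((ρ:ℂ) * (ω:ℂ)^2) ≠ 0 := by
      apply neg_ne_zero.2
      exact mul_ne_zero (Complex.ofReal_ne_zero.2 hρ.ne')
        (pow_ne_zero _ (Complex.ofReal_ne_zero.2 hω))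
    have := h1.symm
    simp only [mul_zero, sub_zero] at this
    exact (mul_eq_zero.1 this).resolve_left hcoef
  -- ODE uniqueness part
  obtain ⟨M₀, hM₀⟩ := isCompact_Icc.exists_bound_of_continuousOn hb
  set M := max M₀ 0 with hMdef
  have hM : ∀ x ∈ Set.Icc (0:ℝ) l, |b x| ≤ M := fun x hx =>
    le_trans (hM₀ x hx) (le_max_left _ _)
  have hMnn : 0 ≤ M := le_max_right _ _
  set bc : ℝ → ℝ := fun t => b (max 0 (min t l)) with hbcdef
  have hbc_eq : ∀ t ∈ Set.Icc (0:ℝ) l, bc t = b t := by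
    intro t ht
    rw [hbcdef]
    simp only
    rw [min_eq_left ht.2, max_eq_right ht.1]
  have hbc_bd : ∀ t, |bc t| ≤ M := by
    intro t
    apply hM
    constructor
    · exact le_max_left _ _
    · exact max_le hl.le (min_le_right _ _)
  -- the linear vector field
  set A : ℝ → (ℂ × ℂ × ℂ × ℂ) → (ℂ × ℂ × ℂ × ℂ) := fun t y =>
    (y.2.1,
     y.2.2.2 - ((ρ:ℂ) * (ω:ℂ)^2 / K) * y.1,
     y.2.2.2,
     (((K:ℂ) - (Iρ:ℂ)*(ω:ℂ)^2) * y.2.2.1 + Complex.I * (bc t : ℂ) * (ω:ℂ) * y.2.2.1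
       - (K:ℂ) * y.2.1) / ((E:ℂ)*(I:ℂ))) with hAdef
  set C : ℝ := 1 + ‖(ρ:ℂ) * (ω:ℂ)^2 / K‖
      + (‖(K:ℂ) - (Iρ:ℂ)*(ω:ℂ)^2‖ + M * |ω| + K) / (E * I) with hCdef
  have hEI : 0 < E * I := mul_pos hE hI
  set a1 : ℝ := ‖(ρ:ℂ) * (ω:ℂ)^2 / K‖ with ha1
  set a2 : ℝ := ‖(K:ℂ) - (Iρ:ℂ)*(ω:ℂ)^2‖ with ha2
  have ha1nn : 0 ≤ a1 := norm_nonneg _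
  have ha2nn : 0 ≤ a2 := norm_nonneg _
  have hXnn : 0 ≤ a2 + M * |ω| + K := by positivity
  have hXC : (a2 + M * |ω| + K) / (E * I) ≤ C := by
    rw [hCdef]; linarith
  have h1C : 1 + a1 ≤ C := by
    rw [hCdef]
    have : 0 ≤ (a2 + M * |ω| + K) / (E * I) := div_nonneg hXnn hEI.le
    linarith
  have hbound : ∀ t (w : ℂ × ℂ × ℂ × ℂ), ‖A t w‖ ≤ C * ‖w‖ := by
    intro t w
    have h1 : ‖w.1‖ ≤ ‖w‖ := norm_fst_le w
    have h2 : ‖w.2.1‖ ≤ ‖w‖ := le_trans (norm_fst_le _) (norm_snd_le w)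
    have h3 : ‖w.2.2.1‖ ≤ ‖w‖ :=
      le_trans (le_trans (norm_fst_le _) (norm_snd_le _)) (norm_snd_le w)
    have h4 : ‖w.2.2.2‖ ≤ ‖w‖ :=
      le_trans (le_trans (norm_snd_le _) (norm_snd_le _)) (norm_snd_le w)
    have hwnn : 0 ≤ ‖w‖ := norm_nonneg _
    have hC1 : (1:ℝ) ≤ C := by linarith
    rw [hAdef]
    simp only [Prod.norm_def]
    apply max_le
    · exact le_trans h2 (le_mul_of_one_le_left hwnn hC1)
    apply max_le
    · calc ‖w.2.2.2 - ((ρ:ℂ) * (ω:ℂ)^2 / K) * w.1‖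
          ≤ ‖w.2.2.2‖ + ‖((ρ:ℂ) * (ω:ℂ)^2 / K) * w.1‖ := norm_sub_le _ _
        _ ≤ ‖w‖ + a1 * ‖w‖ := by
            rw [norm_mul]
            exact add_le_add h4 (mul_le_mul_of_nonneg_left h1 ha1nn)
        _ = (1 + a1) * ‖w‖ := by ring
        _ ≤ C * ‖w‖ := mul_le_mul_of_nonneg_right h1C hwnn
    apply max_le
    · exact le_trans h4 (le_mul_of_one_le_left hwnn hC1)
    · have hnum : ‖((K:ℂ) - (Iρ:ℂ)*(ω:ℂ)^2) * w.2.2.1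
          + Complex.I * (bc t : ℂ) * (ω:ℂ) * w.2.2.1 - (K:ℂ) * w.2.1‖
          ≤ (a2 + M * |ω| + K) * ‖w‖ := by
        calc ‖((K:ℂ) - (Iρ:ℂ)*(ω:ℂ)^2) * w.2.2.1
            + Complex.I * (bc t : ℂ) * (ω:ℂ) * w.2.2.1 - (K:ℂ) * w.2.1‖
            ≤ ‖((K:ℂ) - (Iρ:ℂ)*(ω:ℂ)^2) * w.2.2.1‖
              + ‖Complex.I * (bc t : ℂ) * (ω:ℂ) * w.2.2.1‖ + ‖(K:ℂ) * w.2.1‖ :=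
              le_trans (norm_sub_le _ _) (by gcongr; exact norm_add_le _ _)
          _ ≤ a2 * ‖w‖ + (M * |ω|) * ‖w‖ + K * ‖w‖ := by
              refine add_le_add (add_le_add ?_ ?_) ?_
              · rw [norm_mul]
                exact mul_le_mul_of_nonneg_left h3 ha2nn
              · rw [norm_mul, norm_mul, norm_mul, Complex.norm_I, one_mul,
                  Complex.norm_real, Complex.norm_real, Real.norm_eq_abs, Real.norm_eq_abs]
                apply mul_le_mul _ h3 (norm_nonneg _) (by positivity)
                exact mul_le_mul_of_nonneg_right (hbc_bd t) (abs_nonneg ω)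
              · rw [norm_mul, Complex.norm_real, Real.norm_eq_abs, abs_of_pos hK]
                exact mul_le_mul_of_nonneg_left h2 hK.le
          _ = (a2 + M * |ω| + K) * ‖w‖ := by ring
      rw [norm_div, norm_mul, Complex.norm_real, Complex.norm_real,
        Real.norm_eq_abs, Real.norm_eq_abs, abs_of_pos hE, abs_of_pos hI]
      calc ‖((K:ℂ) - (Iρ:ℂ)*(ω:ℂ)^2) * w.2.2.1
            + Complex.I * (bc t : ℂ) * (ω:ℂ) * w.2.2.1 - (K:ℂ) * w.2.1‖ / (E * I)
          ≤ ((a2 + M * |ω| + K) * ‖w‖) / (E * I) := by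
            gcongr
        _ = ((a2 + M * |ω| + K) / (E * I)) * ‖w‖ := by ring
        _ ≤ C * ‖w‖ := mul_le_mul_of_nonneg_right hXC hwnn
  -- Lipschitz property
  have hCnn : 0 ≤ C := by linarith
  have hAlin : ∀ t (y z : ℂ × ℂ × ℂ × ℂ), A t y - A t z = A t (y - z) := by
    intro t y z
    simp only [hAdef, Prod.mk_sub_mk, Prod.fst_sub, Prod.snd_sub, Prod.mk.injEq]
    refine ⟨trivial, by ring, trivial, by ring⟩
  have hlip : ∀ t, LipschitzWith (Real.toNNReal C) (A t) := by
    intro t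
    apply LipschitzWith.of_dist_le_mul
    intro y z
    rw [dist_eq_norm, dist_eq_norm, hAlin t y z, Real.coe_toNNReal C hCnn]
    exact hbound t (y - z)
  -- the trajectory
  set Y : ℝ → ℂ × ℂ × ℂ × ℂ := fun t => (u t, deriv u t, v t, deriv v t) with hYdef
  have hYc : Y c = 0 := by
    rw [hYdef]
    simp only
    rw [huz, hduz c hcmem, hvz c hcmem, hdvz c hcmem]
    rfl
  have hf : ∀ t ∈ Set.Ioo (0:ℝ) l,
      HasDerivAt Y (A t (Y t)) t ∧ Y t ∈ (Set.univ : Set (ℂ × ℂ × ℂ × ℂ)) := by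
    intro t ht
    refine ⟨?_, trivial⟩
    obtain ⟨hu1, hu2⟩ := reg_aux hu ht
    obtain ⟨hv1, hv2⟩ := reg_aux hv ht
    have e1 : deriv (deriv u) t = deriv v t - ((ρ:ℂ)*(ω:ℂ)^2/K) * u t := by
      apply mul_left_cancel₀ hKc
      field_simp
      linear_combination heq1 t ht
    have e2 : deriv (deriv v) t = (((K:ℂ) - (Iρ:ℂ)*(ω:ℂ)^2) * v t
        + Complex.I * (bc t : ℂ) * (ω:ℂ) * v t - (K:ℂ) * deriv u t) / ((E:ℂ)*(I:ℂ)) := by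
      rw [hbc_eq t (Ioo_subset_Icc_self ht)]
      apply mul_left_cancel₀ hEIc
      rw [mul_div_cancel₀ _ hEIc]
      linear_combination heq2 t ht
    rw [hAdef, hYdef]
    simp only
    exact hu1.prodMk ((e1 ▸ hu2).prodMk (hv1.prodMk (e2 ▸ hv2)))
  have hg : ∀ t ∈ Set.Ioo (0:ℝ) l,
      HasDerivAt (fun _ => (0 : ℂ × ℂ × ℂ × ℂ)) (A t 0) t
        ∧ (0 : ℂ × ℂ × ℂ × ℂ) ∈ (Set.univ : Set (ℂ × ℂ × ℂ × ℂ)) := by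
    intro t ht
    refine ⟨?_, trivial⟩
    have hA0 : A t (0 : ℂ × ℂ × ℂ × ℂ) = 0 := by
      simp only [hAdef, Prod.fst_zero, Prod.snd_zero, mul_zero, zero_sub, sub_zero,
        zero_add, add_zero, zero_div, neg_zero]
      rfl
    rw [hA0]
    exact hasDerivAt_const t 0
  have hEq : Set.EqOn Y (fun _ => 0) (Set.Ioo 0 l) :=
    ODE_solution_unique_of_mem_Ioo
      (fun t _ => ((hlip t).lipschitzOnWith : LipschitzOnWith _ (A t) Set.univ))
      (hsub hcmem) hf hg hYc
  intro x hx
  rcases eq_or_lt_of_le hx.1 with h0 | h0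
  · rw [← h0]; exact ⟨hu0, hv0⟩
  rcases eq_or_lt_of_le hx.2 with h1 | h1
  · rw [h1]; exact ⟨hul, hvl⟩
  have hYx := hEq ⟨h0, h1⟩
  rw [hYdef] at hYx
  simp only [Prod.mk_eq_zero] at hYx
  exact ⟨hYx.1, hYx.2.2.1⟩
end

section
/- Let α, β, γ > 0 and l > 0 be real numbers. Set Δ = √((α² − β²)² + 4α²γ²), X₋ = −(α² + β² + Δ)/2 and X₊ = 2α²(γ² − β²)/(α² + β² + Δ). Let u : [0,l] → ℝ be four times continuously differentiable and satisfy u'''' + (α² + β²)·u'' + α²·(β² − γ²)·u = 0 on (0,l). Then there exist real constants A₁, A₂, A₃, A₄ such that for all x ∈be (0,l): u(x) = A₁·cos(√|X₋|·x) + A₂·sin(√|X₋|·x) + w(x), where w(x) = A₃·exp(√(X₊)·x) + A₄·exp(−√(X₊)·x) if γ² > β², w(x) = A₃·cos(√|X₊|·x) + A₄·sin(√|X₊|·x) if γ² < β², and w(x) = A₃·x + A₄ if γ² = β². -/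
private lemma const_on {s : Set ℝ} (hs : Convex ℝ s) (hso : IsOpen s) {f : ℝ → ℝ}
    (hf : ∀ x ∈ s, HasDerivAt f 0 x) {x y : ℝ} (hx : x ∈ s) (hy : y ∈ s) : f x = f y := by
  refine hs.is_const_of_fderivWithin_eq_zero
    (fun z hz => ((hf z hz).differentiableAt).differentiableWithinAt)
    (fun z hz => ?_) hx hy
  rw [fderivWithin_of_isOpen hso hz, (hf z hz).hasFDerivAt.fderiv]
  ext t; simp

private lemma first_order {s : Set ℝ} (hs : Convex ℝ s) (hso : IsOpen s)
    {f : ℝ → ℝ} {c : ℝ} {t₀ : ℝ} (ht₀ : t₀ ∈ s)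
    (hf : ∀ x ∈ s, HasDerivAt f (c * f x) x) :
    ∃ C, ∀ x ∈ s, f x = C * Real.exp (c * x) := by
  refine ⟨f t₀ * Real.exp (-(c * t₀)), fun x hx => ?_⟩
  have key : ∀ z ∈ s, HasDerivAt (fun y => f y * Real.exp (-(c * y))) 0 z := by
    intro z hz
    have hlin : HasDerivAt (fun y : ℝ => -(c * y)) (-c) z := by
      exact ((hasDerivAt_id z).const_mul c).neg.congr_deriv (by ring)
    have := (hf z hz).mul hlin.exp
    exact this.congr_deriv (by ring)
  have h2 : f x * Real.exp (-(c * x)) = f t₀ * Real.exp (-(c * t₀)) :=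
    const_on hs hso key hx ht₀
  have e1 : Real.exp (-(c * x)) * Real.exp (c * x) = 1 := by
    rw [← Real.exp_add, neg_add_cancel, Real.exp_zero]
  calc f x = f x * Real.exp (-(c * x)) * Real.exp (c * x) := by rw [mul_assoc, e1, mul_one]
    _ = _ := by rw [h2]


private lemma second_order_pos {s : Set ℝ} (hs : Convex ℝ s) (hso : IsOpen s)
    {f f1 : ℝ → ℝ} {k t₀ : ℝ} (hk : 0 < k) (ht₀ : t₀ ∈ s)
    (hf : ∀ x ∈ s, HasDerivAt f (f1 x) x)
    (hf1 : ∀ x ∈ s, HasDerivAt f1 (k ^ 2 * f x) x) :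
    ∃ A B, ∀ x ∈ s, f x = A * Real.exp (k * x) + B * Real.exp (-(k * x)) := by
  obtain ⟨C, hC⟩ := first_order hs hso (f := fun y => f1 y + k * f y) (c := k) ht₀
    (fun x hx => by
      have := (hf1 x hx).add ((hf x hx).const_mul k)
      exact this.congr_deriv (by ring))
  obtain ⟨D, hD⟩ := first_order hs hso (f := fun y => f1 y - k * f y) (c := -k) ht₀
    (fun x hx => by
      have := (hf1 x hx).sub ((hf x hx).const_mul k)
      exact this.congr_deriv (by ring))
  refine ⟨C / (2 * k), -D / (2 * k), fun x hx => ?_⟩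
  have h1 := hC x hx
  have h2 := hD x hx
  rw [show -k * x = -(k * x) by ring] at h2
  have hk' : (2 * k) ≠ 0 := by positivity
  field_simp
  linarith [h1, h2]

private lemma second_order_zero {s : Set ℝ} (hs : Convex ℝ s) (hso : IsOpen s)
    {f f1 : ℝ → ℝ} {t₀ : ℝ} (ht₀ : t₀ ∈ s)
    (hf : ∀ x ∈ s, HasDerivAt f (f1 x) x)
    (hf1 : ∀ x ∈ s, HasDerivAt f1 0 x) :
    ∃ A B, ∀ x ∈ s, f x = A * x + B := by
  refine ⟨f1 t₀, f t₀ - f1 t₀ * t₀, fun x hx => ?_⟩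
  have key : ∀ y ∈ s, HasDerivAt (fun z => f z - f1 t₀ * z) 0 y := by
    intro y hy
    have hc : f1 y = f1 t₀ := const_on hs hso hf1 hy ht₀
    have := (hf y hy).sub ((hasDerivAt_id y).const_mul (f1 t₀))
    rw [hc, mul_one, sub_self] at this
    exact this
  have := const_on hs hso key hx ht₀
  linarith

private lemma second_order_neg {s : Set ℝ} (hs : Convex ℝ s) (hso : IsOpen s)
    {f f1 : ℝ → ℝ} {ω t₀ : ℝ} (hω : 0 < ω) (ht₀ : t₀ ∈ s)
    (hf : ∀ x ∈ s, HasDerivAt f (f1 x) x)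
    (hf1 : ∀ x ∈ s, HasDerivAt f1 (-(ω ^ 2) * f x) x) :
    ∃ A B, ∀ x ∈ s, f x = A * Real.cos (ω * x) + B * Real.sin (ω * x) := by
  set A := f t₀ * Real.cos (ω * t₀) - (f1 t₀ / ω) * Real.sin (ω * t₀) with hA
  set B := f t₀ * Real.sin (ω * t₀) + (f1 t₀ / ω) * Real.cos (ω * t₀) with hB
  refine ⟨A, B, fun x hx => ?_⟩
  set g := fun y => f y - (A * Real.cos (ω * y) + B * Real.sin (ω * y)) with hg
  set g1 := fun y => f1 y - (-(A * ω) * Real.sin (ω * y) + B * ω * Real.cos (ω * y)) with hg1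
  have hlin : ∀ y : ℝ, HasDerivAt (fun z : ℝ => ω * z) ω y := fun y => by
    simpa using (hasDerivAt_id y).const_mul ω
  have hgd : ∀ y ∈ s, HasDerivAt g (g1 y) y := by
    intro y hy
    have := (hf y hy).sub ((((hlin y).cos).const_mul A).add (((hlin y).sin).const_mul B))
    exact this.congr_deriv (by simp [hg1]; ring)
  have hgd1 : ∀ y ∈ s, HasDerivAt g1 (-(ω ^ 2) * g y) y := by
    intro y hy
    have := (hf1 y hy).sub ((((hlin y).sin).const_mul (-(A * ω))).add
      (((hlin y).cos).const_mul (B * ω)))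
    exact this.congr_deriv (by simp [hg]; ring)
  have hE : ∀ y ∈ s, HasDerivAt (fun z => g1 z ^ 2 + ω ^ 2 * g z ^ 2) 0 y := by
    intro y hy
    have := ((hgd1 y hy).pow 2).add (((hgd y hy).pow 2).const_mul (ω ^ 2))
    exact this.congr_deriv (by ring)
  have hcs := Real.sin_sq_add_cos_sq (ω * t₀)
  have hω' : ω ≠ 0 := ne_of_gt hω
  have hgt : g t₀ = 0 := by
    simp only [hg, hA, hB]
    field_simp
    linear_combination (-(f t₀ * ω)) * hcs
  have hg1t : g1 t₀ = 0 := by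
    simp only [hg1, hA, hB]
    field_simp
    linear_combination (-(f1 t₀)) * hcs
  have hEx : g1 x ^ 2 + ω ^ 2 * g x ^ 2 = 0 := by
    have := const_on hs hso hE hx ht₀
    rw [this, hgt, hg1t]; ring
  have hsq : g x ^ 2 = 0 := by
    have hω2 : 0 < ω ^ 2 := by positivity
    nlinarith [sq_nonneg (g1 x), sq_nonneg (g x), mul_nonneg (le_of_lt hω2) (sq_nonneg (g x))]
  have hgx : g x = 0 := by
    exact pow_eq_zero_iff two_ne_zero |>.mp hsq
  have : f x - (A * Real.cos (ω * x) + B * Real.sin (ω * x)) = 0 := hgx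
  linarith


/-- Explicit-solution part of Proposition 1: the general solution (R28) of the
constant-coefficient fourth-order equation (R26). -/
theorem stmt_8 (α β γ l Δ Xm Xp : ℝ)
    (hα : 0 < α) (hβ : 0 < β) (hγ : 0 < γ) (hl : 0 < l)
    (hΔ : Δ = Real.sqrt ((α ^ 2 - β ^ 2) ^ 2 + 4 * α ^ 2 * γ ^ 2))
    (hXm : Xm = -(α ^ 2 + β ^ 2 + Δ) / 2)
    (hXp : Xp = 2 * α ^ 2 * (γ ^ 2 - β ^ 2) / (α ^ 2 + β ^ 2 + Δ))
    (u : ℝ → ℝ)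
    (hu : ContDiffOn ℝ 4 u (Set.Icc 0 l))
    (hode : ∀ x ∈ Set.Ioo (0 : ℝ) l,
      iteratedDeriv 4 u x + (α ^ 2 + β ^ 2) * iteratedDeriv 2 u x
        + α ^ 2 * (β ^ 2 - γ ^ 2) * u x = 0) :
    ∃ A₁ A₂ A₃ A₄ : ℝ,
      (β ^ 2 < γ ^ 2 → ∀ x ∈ Set.Ioo (0 : ℝ) l,
        u x = A₁ * Real.cos (Real.sqrt |Xm| * x) + A₂ * Real.sin (Real.sqrt |Xm| * x)
          + A₃ * Real.exp (Real.sqrt Xp * x) + A₄ * Real.exp (-(Real.sqrt Xp * x))) ∧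
      (γ ^ 2 < β ^ 2 → ∀ x ∈ Set.Ioo (0 : ℝ) l,
        u x = A₁ * Real.cos (Real.sqrt |Xm| * x) + A₂ * Real.sin (Real.sqrt |Xm| * x)
          + A₃ * Real.cos (Real.sqrt |Xp| * x) + A₄ * Real.sin (Real.sqrt |Xp| * x)) ∧
      (γ ^ 2 = β ^ 2 → ∀ x ∈ Set.Ioo (0 : ℝ) l,
        u x = A₁ * Real.cos (Real.sqrt |Xm| * x) + A₂ * Real.sin (Real.sqrt |Xm| * x)
          + A₃ * x + A₄) := by
  -- basic facts about Δ, Xm, Xp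
  have ht : (0:ℝ) ≤ (α ^ 2 - β ^ 2) ^ 2 + 4 * α ^ 2 * γ ^ 2 := by positivity
  have hΔsq : Δ ^ 2 = (α ^ 2 - β ^ 2) ^ 2 + 4 * α ^ 2 * γ ^ 2 := by
    rw [hΔ]; exact Real.sq_sqrt ht
  have hΔpos : 0 < Δ := by rw [hΔ]; exact Real.sqrt_pos.mpr (by positivity)
  have hα2 : 0 < α ^ 2 := by positivity
  have hβ2 : 0 < β ^ 2 := by positivity
  have hdenpos : 0 < α ^ 2 + β ^ 2 + Δ := by linarith
  have hden : α ^ 2 + β ^ 2 + Δ ≠ 0 := ne_of_gt hdenpos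
  have hΔne : Δ ≠ 0 := ne_of_gt hΔpos
  have hsum : Xm + Xp = -(α ^ 2 + β ^ 2) := by
    rw [hXm, hXp]; field_simp; nlinarith [hΔsq]
  have hprod : Xm * Xp = α ^ 2 * (β ^ 2 - γ ^ 2) := by
    rw [hXm, hXp]; field_simp; ring
  have hXmneg : Xm < 0 := by rw [hXm]; nlinarith
  have hdiff : Xp - Xm = Δ := by rw [hXm] at hsum ⊢; linarith
  -- the interval
  set s : Set ℝ := Set.Ioo (0:ℝ) l with hsdef
  have hso : IsOpen s := isOpen_Ioo
  have hs : Convex ℝ s := convex_Ioo _ _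
  have ht₀ : l / 2 ∈ s := ⟨by linarith, by linarith⟩
  have hus : ContDiffOn ℝ 4 u s := hu.mono Set.Ioo_subset_Icc_self
  -- derivative chain
  have step : ∀ (m : ℕ) (g : ℝ → ℝ), ContDiffOn ℝ (m + 1 : ℕ) g s →
      (∀ x ∈ s, HasDerivAt g (deriv g x) x) ∧ ContDiffOn ℝ (m : ℕ) (deriv g) s := by
    intro m g hg
    have hg' : ContDiffOn ℝ ((m : WithTop ℕ∞) + 1) g s := by exact_mod_cast hg
    have := (contDiffOn_succ_iff_deriv_of_isOpen hso).mp hg'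
    exact ⟨fun x hx => ((this.1.differentiableAt (hso.mem_nhds hx)).hasDerivAt), this.2.2⟩
  have s3 := step 3 u (by exact_mod_cast hus)
  have s2 := step 2 (deriv u) s3.2
  have s1 := step 1 (deriv (deriv u)) s2.2
  have s0 := step 0 (deriv (deriv (deriv u))) s1.2
  have hd0 := s3.1
  have hd1 := s2.1
  have hd2 := s1.1
  have hd3 := s0.1
  -- rewrite the ODE with iterated `deriv`
  have hode' : ∀ x ∈ s, deriv (deriv (deriv (deriv u))) x
      = -((α ^ 2 + β ^ 2) * deriv (deriv u) x + α ^ 2 * (β ^ 2 - γ ^ 2) * u x) := by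
    intro x hx
    have H := hode x hx
    have e4 : iteratedDeriv 4 u x = deriv (deriv (deriv (deriv u))) x := by
      rw [iteratedDeriv_eq_iterate]; rfl
    have e2 : iteratedDeriv 2 u x = deriv (deriv u) x := by
      rw [iteratedDeriv_eq_iterate]; rfl
    rw [e4, e2] at H
    linarith
  -- v = u'' - Xm u satisfies v'' = Xp v
  have hv : ∀ x ∈ s, HasDerivAt (fun y => deriv (deriv u) y - Xm * u y)
      (deriv (deriv (deriv u)) x - Xm * deriv u x) x :=
    fun x hx => (hd2 x hx).sub ((hd0 x hx).const_mul Xm)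
  have hv1 : ∀ x ∈ s, HasDerivAt (fun y => deriv (deriv (deriv u)) y - Xm * deriv u y)
      (Xp * (deriv (deriv u) x - Xm * u x)) x := by
    intro x hx
    have H := (hd3 x hx).sub ((hd1 x hx).const_mul Xm)
    have e : deriv (deriv (deriv (deriv u))) x - Xm * deriv (deriv u) x
        = Xp * (deriv (deriv u) x - Xm * u x) := by
      have ho := hode' x hx
      linear_combination ho - (deriv (deriv u) x) * hsum + (u x) * hprod
    rw [e] at H
    exact H
  -- h = u - v/Δ satisfies h'' = Xm h
  have hω : 0 < Real.sqrt |Xm| := Real.sqrt_pos.mpr (abs_pos.mpr (ne_of_lt hXmneg))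
  have hωsq : Real.sqrt |Xm| ^ 2 = -Xm := by
    rw [Real.sq_sqrt (abs_nonneg Xm)]; exact abs_of_neg hXmneg
  have hh : ∀ x ∈ s, HasDerivAt (fun y => u y - (deriv (deriv u) y - Xm * u y) / Δ)
      (deriv u x - (deriv (deriv (deriv u)) x - Xm * deriv u x) / Δ) x :=
    fun x hx => (hd0 x hx).sub ((hv x hx).div_const Δ)
  have hh1 : ∀ x ∈ s, HasDerivAt
      (fun y => deriv u y - (deriv (deriv (deriv u)) y - Xm * deriv u y) / Δ)
      (-(Real.sqrt |Xm| ^ 2) * (u x - (deriv (deriv u) x - Xm * u x) / Δ)) x := by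
    intro x hx
    have H := (hd1 x hx).sub ((hv1 x hx).div_const Δ)
    have e : deriv (deriv u) x - Xp * (deriv (deriv u) x - Xm * u x) / Δ
        = -(Real.sqrt |Xm| ^ 2) * (u x - (deriv (deriv u) x - Xm * u x) / Δ) := by
      rw [hωsq]
      field_simp
      linear_combination -(deriv (deriv u) x - Xm * u x) * hdiff
    rw [e] at H
    exact H
  obtain ⟨A, B, hAB⟩ := second_order_neg hs hso hω ht₀ hh hh1
  -- final decomposition x ↦ u x = h x + v x / Δ
  rcases lt_trichotomy (β ^ 2) (γ ^ 2) with hlt | heq | hgt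
  · -- β² < γ² : Xp > 0, exponential branch
    have hXppos : 0 < Xp := by
      rw [hXp]; apply div_pos (by nlinarith) hdenpos
    have hk : 0 < Real.sqrt Xp := Real.sqrt_pos.mpr hXppos
    have hksq : Real.sqrt Xp ^ 2 = Xp := Real.sq_sqrt hXppos.le
    obtain ⟨C, D, hCD⟩ := second_order_pos hs hso hk ht₀ hv
      (fun x hx => by rw [hksq]; exact hv1 x hx)
    refine ⟨A, B, C / Δ, D / Δ, fun _ x hx => ?_, fun hc => absurd hc (by linarith),
      fun hc => absurd hc (by linarith)⟩
    have h1 := hAB x hx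
    have h2 := hCD x hx
    rw [h2] at h1
    field_simp at h1 ⊢
    linarith
  · -- β² = γ² : Xp = 0, linear branch
    have hXp0 : Xp = 0 := by rw [hXp, heq]; simp
    obtain ⟨C, D, hCD⟩ := second_order_zero hs hso ht₀ hv
      (fun x hx => by have := hv1 x hx; rwa [hXp0, zero_mul] at this)
    refine ⟨A, B, C / Δ, D / Δ, fun hc => absurd hc (by linarith),
      fun hc => absurd hc (by linarith), fun _ x hx => ?_⟩
    have h1 := hAB x hx
    have h2 := hCD x hx
    rw [h2] at h1
    field_simp at h1 ⊢
    linarith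
  · -- γ² < β² : Xp < 0, trigonometric branch
    have hXpneg : Xp < 0 := by
      rw [hXp]; apply div_neg_of_neg_of_pos (by nlinarith) hdenpos
    have hk : 0 < Real.sqrt |Xp| := Real.sqrt_pos.mpr (abs_pos.mpr (ne_of_lt hXpneg))
    have hksq : Real.sqrt |Xp| ^ 2 = -Xp := by
      rw [Real.sq_sqrt (abs_nonneg Xp)]; exact abs_of_neg hXpneg
    obtain ⟨C, D, hCD⟩ := second_order_neg hs hso hk ht₀ hv
      (fun x hx => by
        have := hv1 x hx
        rw [show -(Real.sqrt |Xp| ^ 2) = Xp by rw [hksq]; ring]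
        exact this)
    refine ⟨A, B, C / Δ, D / Δ, fun hc => absurd hc (by linarith),
      fun _ x hx => ?_, fun hc => absurd hc (by linarith)⟩
    have h1 := hAB x hx
    have h2 := hCD x hx
    rw [h2] at h1
    field_simp at h1 ⊢
    linarith
end

section
/- Let ρ, K, I_ρ, E, I > 0 and l > 0 be real numbers, let ω be a nonzero real number, and let 0 ≤ b₀ < b₁ ≤ l. Let u, v : [0,l] → ℝ be twice continuously differentiable functions satisfying on (0,l): K·u'' − K·v' = −ρ·ω²·u and E·I·v'' + K·u' − K·v = −I_ρ·ω²·v, together with u(0) = u(l) = v(0) = v(l) = 0 and u(x) = v(x) = 0 for all x ∈ (b₀,b₁). Then u(x) = 0 and v(x) = 0 for all x ∈ [0,l]. -/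
open Set

/-- The linear vector field of the first-order system is Lipschitz. -/
lemma stmt_9_lip (a b c d : ℝ) :
    LipschitzWith (Real.toNNReal (1 + |a| + |b| + |c| + |d|))
      (fun p : ℝ × ℝ × ℝ × ℝ =>
        (p.2.1, a * p.1 + b * p.2.2.2, p.2.2.2, c * p.2.1 + d * p.2.2.1)) := by
  rw [lipschitzWith_iff_dist_le_mul]
  intro p q
  have ha := abs_nonneg a; have hb := abs_nonneg b
  have hc := abs_nonneg c; have hd := abs_nonneg d
  have hD : (0:ℝ) ≤ dist p q := dist_nonneg
  have s1 : dist p.2 q.2 ≤ dist p q := by rw [Prod.dist_eq]; exact le_max_right _ _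
  have s2 : dist p.2.2 q.2.2 ≤ dist p.2 q.2 := by rw [Prod.dist_eq]; exact le_max_right _ _
  have h1 : |p.1 - q.1| ≤ dist p q := by
    rw [← Real.dist_eq, Prod.dist_eq]; exact le_max_left _ _
  have h2 : |p.2.1 - q.2.1| ≤ dist p q := by
    rw [← Real.dist_eq]
    exact le_trans (by rw [Prod.dist_eq]; exact le_max_left _ _) s1
  have h3 : |p.2.2.1 - q.2.2.1| ≤ dist p q := by
    rw [← Real.dist_eq]
    exact le_trans (le_trans (by rw [Prod.dist_eq]; exact le_max_left _ _) s2) s1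
  have h4 : |p.2.2.2 - q.2.2.2| ≤ dist p q := by
    rw [← Real.dist_eq]
    exact le_trans (le_trans (by rw [Prod.dist_eq]; exact le_max_right _ _) s2) s1
  have hC : ((Real.toNNReal (1 + |a| + |b| + |c| + |d|)) : ℝ) = 1 + |a| + |b| + |c| + |d| := by
    rw [Real.coe_toNNReal]; positivity
  rw [hC, Prod.dist_eq, Prod.dist_eq, Prod.dist_eq]
  have e2 : |a * p.1 + b * p.2.2.2 - (a * q.1 + b * q.2.2.2)| ≤ |a| * dist p q + |b| * dist p q := by
    have heq : a * p.1 + b * p.2.2.2 - (a * q.1 + b * q.2.2.2)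
        = a * (p.1 - q.1) + b * (p.2.2.2 - q.2.2.2) := by ring
    rw [heq]
    calc |a * (p.1 - q.1) + b * (p.2.2.2 - q.2.2.2)|
        ≤ |a * (p.1 - q.1)| + |b * (p.2.2.2 - q.2.2.2)| := abs_add_le _ _
      _ = |a| * |p.1 - q.1| + |b| * |p.2.2.2 - q.2.2.2| := by rw [abs_mul, abs_mul]
      _ ≤ |a| * dist p q + |b| * dist p q :=
          add_le_add (mul_le_mul_of_nonneg_left h1 ha) (mul_le_mul_of_nonneg_left h4 hb)
  have e4 : |c * p.2.1 + d * p.2.2.1 - (c * q.2.1 + d * q.2.2.1)|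
      ≤ |c| * dist p q + |d| * dist p q := by
    have heq : c * p.2.1 + d * p.2.2.1 - (c * q.2.1 + d * q.2.2.1)
        = c * (p.2.1 - q.2.1) + d * (p.2.2.1 - q.2.2.1) := by ring
    rw [heq]
    calc |c * (p.2.1 - q.2.1) + d * (p.2.2.1 - q.2.2.1)|
        ≤ |c * (p.2.1 - q.2.1)| + |d * (p.2.2.1 - q.2.2.1)| := abs_add_le _ _
      _ = |c| * |p.2.1 - q.2.1| + |d| * |p.2.2.1 - q.2.2.1| := by rw [abs_mul, abs_mul]
      _ ≤ |c| * dist p q + |d| * dist p q :=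
          add_le_add (mul_le_mul_of_nonneg_left h2 hc) (mul_le_mul_of_nonneg_left h3 hd)
  simp only [Real.dist_eq]
  refine max_le ?_ (max_le ?_ (max_le ?_ ?_)) <;> nlinarith


/-- Corollary 2: the only solution of the overdetermined undamped eigen-system (2.6)
(vanishing on a subinterval) is the zero solution. -/
theorem stmt_9 (ρ K Iρ E I l ω : ℝ)
    (hρ : 0 < ρ) (hK : 0 < K) (hIρ : 0 < Iρ) (hE : 0 < E) (hI : 0 < I) (hl : 0 < l)
    (hω : ω ≠ 0)
    (b₀ b₁ : ℝ) (hb₀ : 0 ≤ b₀) (hb₀₁ : b₀ < b₁) (hb₁ : b₁ ≤ l)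
    (u v : ℝ → ℝ)
    (hu : ContDiffOn ℝ 2 u (Set.Icc 0 l))
    (hv : ContDiffOn ℝ 2 v (Set.Icc 0 l))
    (heq1 : ∀ x ∈ Set.Ioo (0 : ℝ) l,
      K * deriv (deriv u) x - K * deriv v x = -(ρ * ω ^ 2) * u x)
    (heq2 : ∀ x ∈ Set.Ioo (0 : ℝ) l,
      E * I * deriv (deriv v) x + K * deriv u x - K * v x = -(Iρ * ω ^ 2) * v x)
    (hu0 : u 0 = 0) (hul : u l = 0) (hv0 : v 0 = 0) (hvl : v l = 0)
    (hvanish : ∀ x ∈ Set.Ioo b₀ b₁, u x = 0 ∧ v x = 0) :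
    ∀ x ∈ Set.Icc (0 : ℝ) l, u x = 0 ∧ v x = 0 := by
  -- constants of the first-order system
  set a : ℝ := -(ρ * ω ^ 2) / K with ha_def
  set b : ℝ := (1 : ℝ) with hb_def
  set c : ℝ := -K / (E * I) with hc_def
  set d : ℝ := (K - Iρ * ω ^ 2) / (E * I) with hd_def
  set F : ℝ × ℝ × ℝ × ℝ → ℝ × ℝ × ℝ × ℝ := fun p =>
    (p.2.1, a * p.1 + b * p.2.2.2, p.2.2.2, c * p.2.1 + d * p.2.2.1) with hF_def
  have hopen : IsOpen (Set.Ioo (0:ℝ) l) := isOpen_Ioo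
  have huo : ContDiffOn ℝ 2 u (Set.Ioo 0 l) := hu.mono Set.Ioo_subset_Icc_self
  have hvo : ContDiffOn ℝ 2 v (Set.Ioo 0 l) := hv.mono Set.Ioo_subset_Icc_self
  have hu1 : ∀ x ∈ Set.Ioo (0:ℝ) l, HasDerivAt u (deriv u x) x := fun x hx =>
    ((huo.differentiableOn (by norm_num)).differentiableAt (hopen.mem_nhds hx)).hasDerivAt
  have hv1 : ∀ x ∈ Set.Ioo (0:ℝ) l, HasDerivAt v (deriv v x) x := fun x hx =>
    ((hvo.differentiableOn (by norm_num)).differentiableAt (hopen.mem_nhds hx)).hasDerivAt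
  have hu2' : ContDiffOn ℝ 1 (deriv u) (Set.Ioo 0 l) :=
    huo.deriv_of_isOpen hopen (by norm_num)
  have hv2' : ContDiffOn ℝ 1 (deriv v) (Set.Ioo 0 l) :=
    hvo.deriv_of_isOpen hopen (by norm_num)
  have hu2 : ∀ x ∈ Set.Ioo (0:ℝ) l, HasDerivAt (deriv u) (deriv (deriv u) x) x := fun x hx =>
    ((hu2'.differentiableOn (by norm_num)).differentiableAt (hopen.mem_nhds hx)).hasDerivAt
  have hv2 : ∀ x ∈ Set.Ioo (0:ℝ) l, HasDerivAt (deriv v) (deriv (deriv v) x) x := fun x hx =>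
    ((hv2'.differentiableOn (by norm_num)).differentiableAt (hopen.mem_nhds hx)).hasDerivAt
  -- the trajectory
  set w : ℝ → ℝ × ℝ × ℝ × ℝ := fun t => (u t, deriv u t, v t, deriv v t) with hw_def
  have hw' : ∀ t ∈ Set.Ioo (0:ℝ) l, HasDerivAt w (F (w t)) t := by
    intro t ht
    have e1 : deriv (deriv u) t = a * u t + b * deriv v t := by
      have h := heq1 t ht
      rw [ha_def, hb_def]
      field_simp
      linarith
    have e2 : deriv (deriv v) t = c * deriv u t + d * v t := by
      have h := heq2 t ht
      have hEI : E * I ≠ 0 := by positivity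
      apply mul_left_cancel₀ hEI
      have hcd : E * I * (c * deriv u t + d * v t)
          = -K * deriv u t + (K - Iρ * ω ^ 2) * v t := by
        rw [hc_def, hd_def]; field_simp
      rw [hcd]; linarith
    have h2 : HasDerivAt (deriv u) (a * u t + b * deriv v t) t := e1 ▸ hu2 t ht
    have h4 : HasDerivAt (deriv v) (c * deriv u t + d * v t) t := e2 ▸ hv2 t ht
    exact (hu1 t ht).prodMk (h2.prodMk ((hv1 t ht).prodMk h4))
  -- vanishing at the midpoint
  set c₀ : ℝ := (b₀ + b₁) / 2 with hc₀_def
  have hc₀ : c₀ ∈ Set.Ioo b₀ b₁ := ⟨by linarith, by linarith⟩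
  have hc₀l : c₀ ∈ Set.Ioo (0:ℝ) l := ⟨by linarith [hc₀.1], by linarith [hc₀.2]⟩
  have hEq0 : u =ᶠ[nhds c₀] (fun _ => (0:ℝ)) :=
    Filter.eventuallyEq_of_mem (Ioo_mem_nhds hc₀.1 hc₀.2) (fun x hx => (hvanish x hx).1)
  have hEq0' : v =ᶠ[nhds c₀] (fun _ => (0:ℝ)) :=
    Filter.eventuallyEq_of_mem (Ioo_mem_nhds hc₀.1 hc₀.2) (fun x hx => (hvanish x hx).2)
  have hwc : w c₀ = (0, 0, 0, 0) := by
    have hdu : deriv u c₀ = 0 := by rw [hEq0.deriv_eq]; simp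
    have hdv : deriv v c₀ = 0 := by rw [hEq0'.deriv_eq]; simp
    simp [hw_def, (hvanish c₀ hc₀).1, (hvanish c₀ hc₀).2, hdu, hdv]
  -- uniqueness of ODE solutions
  have hzero : EqOn w (fun _ => ((0:ℝ), (0:ℝ), (0:ℝ), (0:ℝ))) (Set.Ioo 0 l) := by
    apply ODE_solution_unique_of_mem_Ioo
      (v := fun _ p => F p) (s := fun _ => Set.univ)
      (K := Real.toNNReal (1 + |a| + |b| + |c| + |d|))
      (fun _ _ => (stmt_9_lip a b c d).lipschitzOnWith) hc₀l
      (fun t ht => ⟨hw' t ht, trivial⟩)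
    · intro t _
      refine ⟨?_, trivial⟩
      have : F ((0:ℝ), (0:ℝ), (0:ℝ), (0:ℝ)) = ((0:ℝ), (0:ℝ), (0:ℝ), (0:ℝ)) := by
        simp [hF_def]
      rw [this]
      exact hasDerivAt_const _ _
    · rw [hwc]
  -- conclude
  intro x hx
  rcases eq_or_lt_of_le hx.1 with h0 | h0
  · rw [← h0]; exact ⟨hu0, hv0⟩
  rcases eq_or_lt_of_le hx.2 with h1 | h1
  · rw [h1]; exact ⟨hul, hvl⟩
  have := hzero ⟨h0, h1⟩
  have h := Prod.mk.injEq .. ▸ this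
  constructor
  · exact congrArg Prod.fst this
  · exact congrArg (fun p => p.2.2.1) this
end

section
/- Let G be a complex Hilbert space, G₀ a closed linear subspace of G with inclusion map ι : G₀ → G, and let P : G → G₀ denote the orthogonal projection of G onto G₀. For a bounded linear operator T on a Banach space Y, write ‖T‖_ess = inf{‖T + K‖ : K is a compact linear operator on Y}. Then for every bounded linear operator R on G₀: limsup_{n→∞} (‖(ι ∘ R ∘ P)ⁿ‖_ess)^{1/n} = limsup_{n→∞} (‖Rⁿ‖_ess)^{1/n}, where the first essential norm is taken in the bounded operators on G and the second in the bounded operators on G₀; that is, r_e(R∘P) = r_e(R). -/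
open Filter

/-- The essential (Calkin quotient) norm of a bounded operator on a complex Banach
space: the distance to the compact operators. -/
noncomputable def essNorm {Y : Type*} [NormedAddCommGroup Y] [NormedSpace ℂ Y]
    (T : Y →L[ℂ] Y) : ℝ :=
  sInf ((fun C : Y →L[ℂ] Y => ‖T + C‖) '' {C : Y →L[ℂ] Y | IsCompactOperator (⇑C)})

section aux
variable {G : Type*} [NormedAddCommGroup G] [InnerProductSpace ℂ G]
    [CompleteSpace G] (G₀ : Submodule ℂ G) [CompleteSpace G₀]

set_option linter.unusedSectionVars false in
lemma essNorm_comp (S : G₀ →L[ℂ] G₀) :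
    essNorm (G₀.subtypeL.comp (S.comp (Submodule.orthogonalProjectionOnto G₀))) = essNorm S := by
  set ι := G₀.subtypeL
  set P := (Submodule.orthogonalProjectionOnto G₀ : G →L[ℂ] G₀)
  have hP : ‖P‖ ≤ 1 := G₀.orthogonalProjectionOnto_norm_le
  have hbdd1 : BddBelow ((fun C : G →L[ℂ] G => ‖ι.comp (S.comp P) + C‖) ''
      {C | IsCompactOperator (⇑C)}) := ⟨0, by rintro x ⟨C, -, rfl⟩; positivity⟩
  have hbdd2 : BddBelow ((fun C : G₀ →L[ℂ] G₀ => ‖S + C‖) ''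
      {C | IsCompactOperator (⇑C)}) := ⟨0, by rintro x ⟨C, -, rfl⟩; positivity⟩
  have hne1 : ((fun C : G →L[ℂ] G => ‖ι.comp (S.comp P) + C‖) ''
      {C | IsCompactOperator (⇑C)}).Nonempty :=
    ⟨_, Set.mem_image_of_mem _ (show IsCompactOperator (⇑(0 : G →L[ℂ] G)) from
      isCompactOperator_zero)⟩
  have hne2 : ((fun C : G₀ →L[ℂ] G₀ => ‖S + C‖) ''
      {C | IsCompactOperator (⇑C)}).Nonempty :=
    ⟨_, Set.mem_image_of_mem _ (show IsCompactOperator (⇑(0 : G₀ →L[ℂ] G₀)) from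
      isCompactOperator_zero)⟩
  apply le_antisymm
  · -- essNorm (ι S P) ≤ essNorm S
    apply le_csInf hne2
    rintro b ⟨K, hK, rfl⟩
    have hcomp : IsCompactOperator (⇑(ι.comp (K.comp P))) :=
      (hK.comp_clm P).clm_comp ι
    refine le_trans (csInf_le hbdd1 ⟨ι.comp (K.comp P), hcomp, rfl⟩) ?_
    show ‖ι.comp (S.comp P) + ι.comp (K.comp P)‖ ≤ ‖S + K‖
    have heq : ι.comp (S.comp P) + ι.comp (K.comp P) = ι.comp ((S + K).comp P) := by
      ext x; simp
    rw [heq]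
    apply ContinuousLinearMap.opNorm_le_bound (M := ‖S + K‖) _ (ContinuousLinearMap.opNorm_nonneg _)
    intro x
    calc ‖(ι.comp ((S + K).comp P)) x‖ = ‖(S + K) (P x)‖ := rfl
      _ ≤ ‖S + K‖ * ‖P x‖ := (S + K).le_opNorm _
      _ ≤ ‖S + K‖ * ‖x‖ := by
          gcongr
          calc ‖P x‖ ≤ ‖P‖ * ‖x‖ := P.le_opNorm x
            _ ≤ 1 * ‖x‖ := by gcongr
            _ = ‖x‖ := one_mul _
  · -- essNorm S ≤ essNorm (ι S P)
    apply le_csInf hne1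
    rintro b ⟨C, hC, rfl⟩
    have hcomp : IsCompactOperator (⇑(P.comp (C.comp ι))) :=
      (hC.comp_clm ι).clm_comp P
    refine le_trans (csInf_le hbdd2 ⟨P.comp (C.comp ι), hcomp, rfl⟩) ?_
    show ‖S + P.comp (C.comp ι)‖ ≤ ‖ι.comp (S.comp P) + C‖
    apply ContinuousLinearMap.opNorm_le_bound (M := ‖ι.comp (S.comp P) + C‖) _ (ContinuousLinearMap.opNorm_nonneg _)
    intro x
    have key : (S + P.comp (C.comp ι)) x
        = P ((ι.comp (S.comp P) + C) (ι x)) := by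
      have h2 : ∀ y : G₀, P (ι y) = y := fun y =>
        Submodule.orthogonalProjectionOnto_mem_subspace_eq_self y
      simp only [ContinuousLinearMap.add_apply, ContinuousLinearMap.comp_apply, map_add, h2]
    rw [key]
    calc ‖P ((ι.comp (S.comp P) + C) (ι x))‖
        ≤ ‖P‖ * ‖(ι.comp (S.comp P) + C) (ι x)‖ := P.le_opNorm _
      _ ≤ 1 * ‖(ι.comp (S.comp P) + C) (ι x)‖ := by gcongr
      _ = ‖(ι.comp (S.comp P) + C) (ι x)‖ := one_mul _
      _ ≤ ‖ι.comp (S.comp P) + C‖ * ‖ι x‖ := (ι.comp (S.comp P) + C).le_opNorm _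
      _ = ‖ι.comp (S.comp P) + C‖ * ‖x‖ := rfl

set_option linter.unusedSectionVars false in
lemma pow_comp (R : G₀ →L[ℂ] G₀) (n : ℕ) (hn : 1 ≤ n) :
    (G₀.subtypeL.comp (R.comp (Submodule.orthogonalProjectionOnto G₀))) ^ n
      = G₀.subtypeL.comp ((R ^ n).comp (Submodule.orthogonalProjectionOnto G₀)) := by
  induction n with
  | zero => omega
  | succ m ih =>
    rcases Nat.eq_or_lt_of_le hn with h | h
    · simp [← h, pow_one]
    · have hm : 1 ≤ m := by omega
      rw [pow_succ, ih hm, pow_succ]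
      ext x
      simp only [ContinuousLinearMap.mul_apply, ContinuousLinearMap.comp_apply]
      exact congrArg _ (congrArg _ (Submodule.orthogonalProjectionOnto_mem_subspace_eq_self _))

end aux

/-- Proposition `UptoPi`: right composition with the orthogonal projection onto a
closed subspace `G₀` of a complex Hilbert space does not change the essential
spectral radius (Hadamard formula) of a bounded operator of `G₀`. -/
theorem stmt_14 {G : Type*} [NormedAddCommGroup G] [InnerProductSpace ℂ G]
    [CompleteSpace G] (G₀ : Submodule ℂ G) [CompleteSpace G₀]
    (R : G₀ →L[ℂ] G₀) :
    limsup (fun n : ℕ =>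
        essNorm ((G₀.subtypeL.comp (R.comp (Submodule.orthogonalProjectionOnto G₀))) ^ n)
          ^ (1 / (n : ℝ))) atTop
      = limsup (fun n : ℕ => essNorm (R ^ n) ^ (1 / (n : ℝ))) atTop := by
  apply limsup_congr
  filter_upwards [eventually_ge_atTop 1] with n hn
  rw [pow_comp G₀ R n hn, essNorm_comp]
end

section
/- Let G be a complex Banach space, G₀ a closed linear subspace of G with inclusion map ι : G₀ → G, and let P : G → G₀ be a bounded linear operator such that P(ι(x)) = x for every x ∈ G₀. For a bounded linear operator T on a Banach space Y, write ‖T‖_ess = inf{‖T + K‖ : K is a compact linear operator on Y}. Then for every bounded linear operator R on G₀: limsup_{n→∞} (‖(ι ∘ R ∘ P)ⁿ‖_ess)^{1/n} = limsup_{n→∞} (‖Rⁿ‖_ess)^{1/n}, where the first essential norm is taken in the bounded operators on G and the second in the bounded operators on G₀. -/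
open Filter

section EssNormAux

variable {Y : Type*} [NormedAddCommGroup Y] [NormedSpace ℂ Y]

lemma essNorm_set_nonempty (T : Y →L[ℂ] Y) :
    ((fun C : Y →L[ℂ] Y => ‖T + C‖) '' {C : Y →L[ℂ] Y | IsCompactOperator (⇑C)}).Nonempty :=
  ⟨‖T + 0‖, ⟨0, by simpa using isCompactOperator_zero, rfl⟩⟩

lemma essNorm_set_bddBelow (T : Y →L[ℂ] Y) :
    BddBelow ((fun C : Y →L[ℂ] Y => ‖T + C‖) '' {C : Y →L[ℂ] Y | IsCompactOperator (⇑C)}) := by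
  refine ⟨0, ?_⟩
  rintro x ⟨C, -, rfl⟩
  exact norm_nonneg _

lemma essNorm_nonneg (T : Y →L[ℂ] Y) : 0 ≤ essNorm T := by
  apply Real.sInf_nonneg
  rintro x ⟨C, -, rfl⟩
  exact norm_nonneg _

lemma essNorm_le (T : Y →L[ℂ] Y) {C : Y →L[ℂ] Y} (hC : IsCompactOperator (⇑C)) :
    essNorm T ≤ ‖T + C‖ :=
  csInf_le (essNorm_set_bddBelow T) ⟨C, hC, rfl⟩

lemma essNorm_le_norm (T : Y →L[ℂ] Y) : essNorm T ≤ ‖T‖ := by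
  have h := essNorm_le T (C := 0) (by simpa using isCompactOperator_zero)
  simpa using h

/-- If `a ≤ c * x` for every element `x` of a nonempty set `S`, with `a, c ≥ 0`,
then `a ≤ c * sInf S`. -/
lemma le_mul_csInf {S : Set ℝ} (hS : S.Nonempty) {a c : ℝ} (ha : 0 ≤ a) (hc : 0 ≤ c)
    (h : ∀ x ∈ S, a ≤ c * x) : a ≤ c * sInf S := by
  rcases eq_or_lt_of_le hc with hc0 | hc0
  · obtain ⟨x, hx⟩ := hS
    have := h x hx
    rw [← hc0] at this ⊢
    simpa using le_antisymm (by simpa using this) ha ▸ le_refl (0 : ℝ)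
  · have h1 : a / c ≤ sInf S := by
      apply le_csInf hS
      intro x hx
      rw [div_le_iff₀ hc0]
      calc a ≤ c * x := h x hx
        _ = x * c := mul_comm _ _
    calc a = c * (a / c) := by field_simp
      _ ≤ c * sInf S := by
          exact mul_le_mul_of_nonneg_left h1 hc

lemma le_mul_essNorm {a c : ℝ} (T : Y →L[ℂ] Y) (ha : 0 ≤ a) (hc : 0 ≤ c)
    (h : ∀ C : Y →L[ℂ] Y, IsCompactOperator (⇑C) → a ≤ c * ‖T + C‖) :
    a ≤ c * essNorm T := by
  unfold essNorm
  apply le_mul_csInf (essNorm_set_nonempty T) ha hc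
  rintro x ⟨K, hK, rfl⟩
  exact h K hK

end EssNormAux

section Comparison

variable {G : Type*} [NormedAddCommGroup G] [NormedSpace ℂ G]
  (G₀ : Submodule ℂ G)

lemma norm_subtypeL_le' : ‖G₀.subtypeL‖ ≤ 1 := by
  apply ContinuousLinearMap.opNorm_le_bound _ zero_le_one
  intro x
  simp

lemma essNorm_conj_le (P : G →L[ℂ] G₀) (T : G₀ →L[ℂ] G₀) :
    essNorm (G₀.subtypeL.comp (T.comp P)) ≤ ‖P‖ * essNorm T := by
  apply le_mul_essNorm T (essNorm_nonneg _) (ContinuousLinearMap.opNorm_nonneg P)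
  intro K hK
  have hcomp : IsCompactOperator (⇑(G₀.subtypeL.comp (K.comp P))) := by
    have h1 : IsCompactOperator (⇑K ∘ ⇑P) := hK.comp_clm P
    have h2 : IsCompactOperator (⇑G₀.subtypeL ∘ ⇑K ∘ ⇑P) := h1.clm_comp G₀.subtypeL
    exact h2
  have heq : G₀.subtypeL.comp (T.comp P) + G₀.subtypeL.comp (K.comp P)
      = G₀.subtypeL.comp ((T + K).comp P) := by
    ext x; simp
  calc essNorm (G₀.subtypeL.comp (T.comp P))
      ≤ ‖G₀.subtypeL.comp (T.comp P) + G₀.subtypeL.comp (K.comp P)‖ := essNorm_le _ hcomp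
    _ = ‖G₀.subtypeL.comp ((T + K).comp P)‖ := by rw [heq]
    _ ≤ ‖G₀.subtypeL‖ * ‖(T + K).comp P‖ := ContinuousLinearMap.opNorm_comp_le _ _
    _ ≤ 1 * ‖(T + K).comp P‖ := by
        exact mul_le_mul_of_nonneg_right (norm_subtypeL_le' G₀) (ContinuousLinearMap.opNorm_nonneg _)
    _ = ‖(T + K).comp P‖ := one_mul _
    _ ≤ ‖T + K‖ * ‖P‖ := ContinuousLinearMap.opNorm_comp_le _ _
    _ = ‖P‖ * ‖T + K‖ := mul_comm _ _

lemma essNorm_conj_ge (P : G →L[ℂ] G₀) (hP : ∀ x : G₀, P (x : G) = x) (T : G₀ →L[ℂ] G₀) :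
    essNorm T ≤ ‖P‖ * essNorm (G₀.subtypeL.comp (T.comp P)) := by
  apply le_mul_essNorm _ (essNorm_nonneg _) (ContinuousLinearMap.opNorm_nonneg P)
  intro C hC
  have hcomp : IsCompactOperator (⇑(P.comp (C.comp G₀.subtypeL))) := by
    have h1 : IsCompactOperator (⇑C ∘ ⇑G₀.subtypeL) := hC.comp_clm G₀.subtypeL
    have h2 : IsCompactOperator (⇑P ∘ ⇑C ∘ ⇑G₀.subtypeL) := h1.clm_comp P
    exact h2
  have heq : T + P.comp (C.comp G₀.subtypeL)
      = P.comp ((G₀.subtypeL.comp (T.comp P) + C).comp G₀.subtypeL) := by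
    ext x
    simp [hP]
  calc essNorm T ≤ ‖T + P.comp (C.comp G₀.subtypeL)‖ := essNorm_le _ hcomp
    _ = ‖P.comp ((G₀.subtypeL.comp (T.comp P) + C).comp G₀.subtypeL)‖ := by rw [heq]
    _ ≤ ‖P‖ * ‖(G₀.subtypeL.comp (T.comp P) + C).comp G₀.subtypeL‖ :=
        ContinuousLinearMap.opNorm_comp_le _ _
    _ ≤ ‖P‖ * (‖G₀.subtypeL.comp (T.comp P) + C‖ * ‖G₀.subtypeL‖) := by
        exact mul_le_mul_of_nonneg_left (ContinuousLinearMap.opNorm_comp_le _ _) (ContinuousLinearMap.opNorm_nonneg P)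
    _ ≤ ‖P‖ * ‖G₀.subtypeL.comp (T.comp P) + C‖ := by
        apply mul_le_mul_of_nonneg_left _ (ContinuousLinearMap.opNorm_nonneg P)
        exact mul_le_of_le_one_right (ContinuousLinearMap.opNorm_nonneg _) (norm_subtypeL_le' G₀)

lemma conj_pow_eq (P : G →L[ℂ] G₀) (hP : ∀ x : G₀, P (x : G) = x) (R : G₀ →L[ℂ] G₀)
    {n : ℕ} (hn : 1 ≤ n) :
    (G₀.subtypeL.comp (R.comp P)) ^ n = G₀.subtypeL.comp ((R ^ n).comp P) := by
  induction n with
  | zero => omega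
  | succ m ih =>
    rcases Nat.eq_or_lt_of_le hn with h1 | h1
    · simp [← h1]
    · have hm : 1 ≤ m := by omega
      rw [pow_succ, ih hm]
      ext x
      simp [hP, pow_succ, ContinuousLinearMap.mul_apply]

end Comparison

section LimsupAux

/-- Key real-analysis lemma: if `a n ≤ c * b n` eventually, with everything nonneg
and the `n`-th root sequences bounded, then the limsup of the `n`-th roots compare. -/
lemma limsup_rpow_le (a b : ℕ → ℝ) (c M : ℝ) (hc : 1 ≤ c) (hM : 1 ≤ M)
    (ha0 : ∀ n, 0 ≤ a n) (hb0 : ∀ n, 0 ≤ b n)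
    (hbM : ∀ n, b n ^ (1 / (n : ℝ)) ≤ M)
    (hab : ∀ n, 1 ≤ n → a n ≤ c * b n) :
    limsup (fun n : ℕ => a n ^ (1 / (n : ℝ))) atTop
      ≤ limsup (fun n : ℕ => b n ^ (1 / (n : ℝ))) atTop := by
  set u : ℕ → ℝ := fun n => a n ^ (1 / (n : ℝ)) with hu
  set v : ℕ → ℝ := fun n => b n ^ (1 / (n : ℝ)) with hv
  have hu0 : ∀ n, 0 ≤ u n := fun n => Real.rpow_nonneg (ha0 n) _
  have hv0 : ∀ n, 0 ≤ v n := fun n => Real.rpow_nonneg (hb0 n) _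
  have hucob : atTop.IsCoboundedUnder (· ≤ ·) u :=
    isCoboundedUnder_le_of_le atTop (x := 0) hu0
  have hvcob : atTop.IsCoboundedUnder (· ≤ ·) v :=
    isCoboundedUnder_le_of_le atTop (x := 0) hv0
  have hvbdd : atTop.IsBoundedUnder (· ≤ ·) v := isBoundedUnder_of ⟨M, hbM⟩
  apply le_of_forall_pos_le_add
  intro ε hε
  set δ : ℝ := ε / M with hδdef
  have hδ : 0 < δ := div_pos hε (by linarith)
  -- eventually `c ≤ (1 + δ) ^ n`
  have htend : Filter.Tendsto (fun n : ℕ => (1 + δ) ^ n) atTop atTop :=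
    tendsto_pow_atTop_atTop_of_one_lt (by linarith)
  have hev : ∀ᶠ n : ℕ in atTop, c ≤ (1 + δ) ^ n := htend.eventually_ge_atTop c
  have hev1 : ∀ᶠ n : ℕ in atTop, 1 ≤ n := eventually_ge_atTop 1
  have key : ∀ᶠ n : ℕ in atTop, u n ≤ v n + ε := by
    filter_upwards [hev, hev1] with n hcn hn1
    have hnR : (0 : ℝ) < (n : ℝ) := by exact_mod_cast hn1
    have h1 : a n ≤ (1 + δ) ^ n * b n := by
      calc a n ≤ c * b n := hab n hn1
        _ ≤ (1 + δ) ^ n * b n := mul_le_mul_of_nonneg_right hcn (hb0 n)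
    have h1δn : (0 : ℝ) ≤ (1 + δ) ^ n := by positivity
    have h2 : u n ≤ ((1 + δ) ^ n * b n) ^ (1 / (n : ℝ)) :=
      Real.rpow_le_rpow (ha0 n) h1 (by positivity)
    have h3 : ((1 + δ) ^ n * b n) ^ (1 / (n : ℝ))
        = ((1 + δ) ^ n : ℝ) ^ (1 / (n : ℝ)) * v n :=
      Real.mul_rpow h1δn (hb0 n)
    have h4 : ((1 + δ) ^ n : ℝ) ^ (1 / (n : ℝ)) = 1 + δ := by
      rw [← Real.rpow_natCast (1 + δ) n, ← Real.rpow_mul (by linarith)]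
      rw [mul_one_div, div_self (ne_of_gt hnR), Real.rpow_one]
    have h5 : u n ≤ (1 + δ) * v n := by
      rw [h3, h4] at h2; exact h2
    have h6 : (1 + δ) * v n = v n + δ * v n := by ring
    have h7 : δ * v n ≤ δ * M := mul_le_mul_of_nonneg_left (hbM n) (le_of_lt hδ)
    have h8 : δ * M = ε := by
      rw [hδdef]; field_simp
    calc u n ≤ (1 + δ) * v n := h5
      _ = v n + δ * v n := h6
      _ ≤ v n + δ * M := by linarith
      _ = v n + ε := by rw [h8]
  have step1 : limsup u atTop ≤ limsup (fun n => v n + ε) atTop :=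
    limsup_le_limsup key hucob
      (isBoundedUnder_of ⟨M + ε, fun n => by have := hbM n; linarith⟩)
  have step2 : limsup (fun n => v n + ε) atTop = limsup v atTop + ε :=
    limsup_add_const atTop v ε hvbdd hvcob
  rw [step2] at step1
  exact step1

end LimsupAux

/-- Proposition `UptoPiB` (Banach-space generalization of Proposition `UptoPi`):
a bounded operator `P : G → G₀` restricting to the identity on the closed subspace
`G₀` does not change the essential spectral radius under right composition. -/
theorem stmt_15 {G : Type*} [NormedAddCommGroup G] [NormedSpace ℂ G] [CompleteSpace G]
    (G₀ : Submodule ℂ G) (hG₀ : IsClosed (G₀ : Set G))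
    (P : G →L[ℂ] G₀) (hP : ∀ x : G₀, P (x : G) = x)
    (R : G₀ →L[ℂ] G₀) :
    limsup (fun n : ℕ =>
        essNorm ((G₀.subtypeL.comp (R.comp P)) ^ n) ^ (1 / (n : ℝ))) atTop
      = limsup (fun n : ℕ => essNorm (R ^ n) ^ (1 / (n : ℝ))) atTop := by
  set S : G →L[ℂ] G := G₀.subtypeL.comp (R.comp P) with hS
  set a : ℕ → ℝ := fun n => essNorm (S ^ n) with ha
  set b : ℕ → ℝ := fun n => essNorm (R ^ n) with hb
  set c : ℝ := max ‖P‖ 1 with hc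
  set M : ℝ := max ‖S‖ (max ‖R‖ 1) with hMdef
  have hc1 : 1 ≤ c := le_max_right _ _
  have hM1 : 1 ≤ M := le_trans (le_max_right _ _) (le_max_right _ _)
  have hM0 : 0 ≤ M := by linarith
  have ha0 : ∀ n, 0 ≤ a n := fun n => essNorm_nonneg _
  have hb0 : ∀ n, 0 ≤ b n := fun n => essNorm_nonneg _
  -- root bounds
  have rootBound : ∀ (x : ℝ), 0 ≤ x → ∀ n : ℕ, x ≤ M → ∀ e : ℝ, 0 ≤ e → e ≤ x ^ n →
      e ^ (1 / (n : ℝ)) ≤ M := by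
    intro x hx n hxM e he hle
    rcases Nat.eq_zero_or_pos n with rfl | hn
    · simp [Real.rpow_natCast]
      linarith
    · have hnR : (0 : ℝ) < (n : ℝ) := by exact_mod_cast hn
      have h1 : e ^ (1 / (n : ℝ)) ≤ (M ^ n) ^ (1 / (n : ℝ)) := by
        apply Real.rpow_le_rpow he _ (by positivity)
        calc e ≤ x ^ n := hle
          _ ≤ M ^ n := pow_le_pow_left₀ hx hxM n
      have h2 : (M ^ n : ℝ) ^ (1 / (n : ℝ)) = M := by
        rw [← Real.rpow_natCast M n, ← Real.rpow_mul hM0]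
        rw [mul_one_div, div_self (ne_of_gt hnR), Real.rpow_one]
      rw [h2] at h1
      exact h1
  have haM : ∀ n, a n ^ (1 / (n : ℝ)) ≤ M := by
    intro n
    apply rootBound ‖S‖ (ContinuousLinearMap.opNorm_nonneg S) n (le_max_left _ _) _ (ha0 n)
    calc a n ≤ ‖S ^ n‖ := essNorm_le_norm _
      _ ≤ ‖S‖ ^ n := by
          rcases Nat.eq_zero_or_pos n with rfl | hn
          · simpa [ContinuousLinearMap.one_def] using ContinuousLinearMap.norm_id_le
          · exact norm_pow_le' S hn
  have hbM : ∀ n, b n ^ (1 / (n : ℝ)) ≤ M := by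
    intro n
    apply rootBound ‖R‖ (ContinuousLinearMap.opNorm_nonneg R) n (le_trans (le_max_left _ _) (le_max_right _ _)) _ (hb0 n)
    calc b n ≤ ‖R ^ n‖ := essNorm_le_norm _
      _ ≤ ‖R‖ ^ n := by
          rcases Nat.eq_zero_or_pos n with rfl | hn
          · simpa [ContinuousLinearMap.one_def] using ContinuousLinearMap.norm_id_le
          · exact norm_pow_le' R hn
  have hab : ∀ n, 1 ≤ n → a n ≤ c * b n := by
    intro n hn
    have h1 : a n = essNorm (G₀.subtypeL.comp ((R ^ n).comp P)) := by
      rw [ha]; simp only []; rw [conj_pow_eq G₀ P hP R hn]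
    rw [h1]
    calc essNorm (G₀.subtypeL.comp ((R ^ n).comp P)) ≤ ‖P‖ * essNorm (R ^ n) :=
          essNorm_conj_le G₀ P (R ^ n)
      _ ≤ c * b n := mul_le_mul_of_nonneg_right (le_max_left _ _) (hb0 n)
  have hba : ∀ n, 1 ≤ n → b n ≤ c * a n := by
    intro n hn
    have h1 : a n = essNorm (G₀.subtypeL.comp ((R ^ n).comp P)) := by
      rw [ha]; simp only []; rw [conj_pow_eq G₀ P hP R hn]
    calc b n ≤ ‖P‖ * essNorm (G₀.subtypeL.comp ((R ^ n).comp P)) :=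
          essNorm_conj_ge G₀ P hP (R ^ n)
      _ ≤ c * a n := by
          rw [h1]
          exact mul_le_mul_of_nonneg_right (le_max_left _ _) (essNorm_nonneg _)
  exact le_antisymm
    (limsup_rpow_le a b c M hc1 hM1 ha0 hb0 hbM hab)
    (limsup_rpow_le b a c M hc1 hM1 hb0 ha0 haM hba)
end

section
/- Let ρ, K, I_ρ, E, I > 0 and l > 0 be real numbers, let b : [0,l] → ℝ be continuous and nonnegative, and let λ ∈ ℂ. Consider continuously differentiable functions p, φ, q, ψ : [0,l] → ℂ satisfying on [0,l]: p' = −λ·√(ρ/K)·p, φ' = −√(I_ρ/(E·I))·(λ + b/(2·I_ρ))·φ, q' = λ·√(ρ/K)·q, ψ' = √(I_ρ/(E·I))·(λ + b/(2·I_ρ))·ψ, together with the boundary conditions (p+q)(0) = (p+q)(l) = 0 and (φ+ψ)(0) = (φ+ψ)(l) = 0. Then a solution (p,φ,q,ψ) not identically (0,0,0,0) exists if and only if λ belongs to the set {i·k·π·√(K/ρ)/l : k ∈ ℤ} ∪ {−(1/(2·l·I_ρ))·∫₀ˡ b(y) dy + i·k·π·√(E·I/I_ρ)/l : k ∈ ℤ}.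 -/
open Set Complex

/-- Representation of solutions of a linear first-order ODE on `[0, l]`:
if `A' = a` on the interval with `A 0 = 0`, and `f' = a • f`, then
`f x = f 0 * exp (A x)`. -/
lemma ode_rep_aux {l : ℝ} (f a A : ℝ → ℂ)
    (hA : ∀ x ∈ Icc (0:ℝ) l, HasDerivWithinAt A (a x) (Icc 0 l) x)
    (hA0 : A 0 = 0)
    (hf : ∀ x ∈ Icc (0:ℝ) l, HasDerivWithinAt f (a x * f x) (Icc 0 l) x) :
    ∀ x ∈ Icc (0:ℝ) l, f x = f 0 * Complex.exp (A x) := by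
  have hg' : ∀ x ∈ Icc (0:ℝ) l,
      HasDerivWithinAt (fun x => f x * Complex.exp (-A x)) 0 (Icc 0 l) x := by
    intro x hx
    have h1 := (hf x hx).mul ((hA x hx).neg.cexp)
    refine h1.congr_deriv ?_
    ring
  have hcont : ContinuousOn (fun x => f x * Complex.exp (-A x)) (Icc 0 l) :=
    fun x hx => (hg' x hx).continuousWithinAt
  have hconst : ∀ x ∈ Icc (0:ℝ) l,
      f x * Complex.exp (-A x) = f 0 * Complex.exp (-A 0) := by
    apply constant_of_has_deriv_right_zero hcont
    intro x hx
    have h := (hg' x (Ico_subset_Icc_self hx)).mono (Icc_subset_Icc hx.1 le_rfl)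
    exact h.mono_of_mem_nhdsWithin (Icc_mem_nhdsGE_of_mem ⟨le_rfl, hx.2⟩)
  intro x hx
  have hc := hconst x hx
  rw [hA0, neg_zero, Complex.exp_zero, mul_one] at hc
  calc f x = f x * Complex.exp (-A x) * Complex.exp (A x) := by
        rw [mul_assoc, ← Complex.exp_add, neg_add_cancel, Complex.exp_zero, mul_one]
    _ = f 0 * Complex.exp (A x) := by rw [hc]

/-- Computation of the spectrum of the decoupled Riemann-invariant operator
`S_{1,C₀}`: the eigenvalue problem with Dirichlet-type boundary conditions has a
nontrivial solution exactly for `λ` in the displayed set. -/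
theorem stmt_18 (ρ K Iρ E I l : ℝ)
    (hρ : 0 < ρ) (hK : 0 < K) (hIρ : 0 < Iρ) (hE : 0 < E) (hI : 0 < I) (hl : 0 < l)
    (b : ℝ → ℝ) (hb : ContinuousOn b (Set.Icc 0 l))
    (hbnonneg : ∀ x ∈ Set.Icc (0 : ℝ) l, 0 ≤ b x)
    (lam : ℂ) :
    (∃ p φ q ψ : ℝ → ℂ,
      (∀ x ∈ Set.Icc (0 : ℝ) l,
        HasDerivWithinAt p (-lam * (Real.sqrt (ρ / K) : ℂ) * p x) (Set.Icc 0 l) x) ∧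
      (∀ x ∈ Set.Icc (0 : ℝ) l,
        HasDerivWithinAt φ
          (-(Real.sqrt (Iρ / (E * I)) : ℂ) * (lam + (b x : ℂ) / (2 * (Iρ : ℂ))) * φ x)
          (Set.Icc 0 l) x) ∧
      (∀ x ∈ Set.Icc (0 : ℝ) l,
        HasDerivWithinAt q (lam * (Real.sqrt (ρ / K) : ℂ) * q x) (Set.Icc 0 l) x) ∧
      (∀ x ∈ Set.Icc (0 : ℝ) l,
        HasDerivWithinAt ψ
          ((Real.sqrt (Iρ / (E * I)) : ℂ) * (lam + (b x : ℂ) / (2 * (Iρ : ℂ))) * ψ x)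
          (Set.Icc 0 l) x) ∧
      p 0 + q 0 = 0 ∧ p l + q l = 0 ∧ φ 0 + ψ 0 = 0 ∧ φ l + ψ l = 0 ∧
      ¬(∀ x ∈ Set.Icc (0 : ℝ) l, p x = 0 ∧ φ x = 0 ∧ q x = 0 ∧ ψ x = 0)) ↔
    ((∃ k : ℤ, lam = Complex.I * (((k : ℝ) * Real.pi / l) * Real.sqrt (K / ρ) : ℝ)) ∨
     (∃ k : ℤ, lam = -((1 / (2 * l * Iρ)) * ∫ y in (0 : ℝ)..l, b y : ℝ)
        + Complex.I * (((k : ℝ) * Real.pi / l) * Real.sqrt (E * I / Iρ) : ℝ))) := by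
  have h0l : (0:ℝ) ≤ l := hl.le
  have h0I : (0:ℝ) ∈ Icc (0:ℝ) l := ⟨le_rfl, h0l⟩
  have hlI : l ∈ Icc (0:ℝ) l := ⟨h0l, le_rfl⟩
  set c : ℝ := Real.sqrt (ρ / K) with hcdef
  set d : ℝ := Real.sqrt (Iρ / (E * I)) with hddef
  have hc : 0 < c := Real.sqrt_pos.2 (div_pos hρ hK)
  have hd : 0 < d := Real.sqrt_pos.2 (div_pos hIρ (mul_pos hE hI))
  have hcinv : Real.sqrt (K / ρ) = c⁻¹ := by
    rw [hcdef, ← Real.sqrt_inv, inv_div]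
  have hdinv : Real.sqrt (E * I / Iρ) = d⁻¹ := by
    rw [hddef, ← Real.sqrt_inv, inv_div]
  have hcC : ((c:ℝ):ℂ) ≠ 0 := by exact_mod_cast hc.ne'
  have hdC : ((d:ℝ):ℂ) ≠ 0 := by exact_mod_cast hd.ne'
  have hlC : ((l:ℝ):ℂ) ≠ 0 := by exact_mod_cast hl.ne'
  have hIρC : ((Iρ:ℝ):ℂ) ≠ 0 := by exact_mod_cast hIρ.ne'
  have hl' : ((l:ℝ):ℂ) * ((l:ℝ):ℂ)⁻¹ = 1 := mul_inv_cancel₀ hlC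
  have hc' : ((c:ℝ):ℂ) * ((c:ℝ):ℂ)⁻¹ = 1 := mul_inv_cancel₀ hcC
  have hd' : ((d:ℝ):ℂ) * ((d:ℝ):ℂ)⁻¹ = 1 := mul_inv_cancel₀ hdC
  -- extend `b` continuously to all of `ℝ`
  set bt : ℝ → ℝ := fun x => b (max 0 (min x l)) with hbtdef
  have hbtc : Continuous bt := by
    apply hb.comp_continuous (continuous_const.max (continuous_id.min continuous_const))
    intro x
    exact ⟨le_max_left _ _, max_le h0l (min_le_right _ _)⟩
  have hbteq : ∀ x ∈ Icc (0:ℝ) l, bt x = b x := by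
    intro x hx
    simp [hbtdef, min_eq_left hx.2, max_eq_right hx.1]
  set B : ℝ → ℝ := fun x => ∫ y in (0:ℝ)..x, bt y with hBdef
  have hB : ∀ x : ℝ, HasDerivAt B (bt x) x := fun x =>
    (hbtc.integral_hasStrictDerivAt 0 x).hasDerivAt
  have hB0 : B 0 = 0 := intervalIntegral.integral_same
  have hInt : (∫ y in (0:ℝ)..l, b y) = B l := by
    exact intervalIntegral.integral_congr fun y hy =>
      (hbteq y (by rwa [uIcc_of_le h0l] at hy)).symm
  -- derivative facts for the exponents
  have hid : ∀ x : ℝ, HasDerivAt (fun y : ℝ => (y:ℂ)) 1 x := by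
    intro x
    simpa using (hasDerivAt_id x).ofReal_comp
  have hAp : ∀ x ∈ Icc (0:ℝ) l,
      HasDerivWithinAt (fun y : ℝ => -lam * (c:ℂ) * (y:ℂ)) (-lam * (c:ℂ)) (Icc 0 l) x := by
    intro x _
    simpa using (((hid x).const_mul (-lam * (c:ℂ))).hasDerivWithinAt)
  have hAq : ∀ x ∈ Icc (0:ℝ) l,
      HasDerivWithinAt (fun y : ℝ => lam * (c:ℂ) * (y:ℂ)) (lam * (c:ℂ)) (Icc 0 l) x := by
    intro x _
    simpa using (((hid x).const_mul (lam * (c:ℂ))).hasDerivWithinAt)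
  have hG : ∀ x : ℝ, HasDerivAt (fun y : ℝ => lam * (y:ℂ) + ((B y : ℝ):ℂ) / (2 * (Iρ:ℂ)))
      (lam + ((bt x : ℝ):ℂ) / (2 * (Iρ:ℂ))) x := by
    intro x
    have h2 : HasDerivAt (fun y : ℝ => ((B y : ℝ):ℂ)) ((bt x : ℝ):ℂ) x := (hB x).ofReal_comp
    simpa [Pi.add_def] using (((hid x).const_mul lam).add (h2.div_const (2 * (Iρ:ℂ))))
  constructor
  · -- forward direction
    rintro ⟨p, φ, q, ψ, hp, hφ, hq, hψ, hbc0, hbcl, hbc0', hbcl', hnt⟩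
    -- representations
    have hrp : ∀ x ∈ Icc (0:ℝ) l, p x = p 0 * Complex.exp (-lam * (c:ℂ) * (x:ℂ)) := by
      apply ode_rep_aux p (fun _ => -lam * (c:ℂ)) _ hAp (by simp) hp
    have hrq : ∀ x ∈ Icc (0:ℝ) l, q x = q 0 * Complex.exp (lam * (c:ℂ) * (x:ℂ)) := by
      apply ode_rep_aux q (fun _ => lam * (c:ℂ)) _ hAq (by simp) hq
    have hrφ : ∀ x ∈ Icc (0:ℝ) l, φ x = φ 0 *
        Complex.exp (-(d:ℂ) * (lam * (x:ℂ) + ((B x : ℝ):ℂ) / (2 * (Iρ:ℂ)))) := by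
      apply ode_rep_aux φ (fun x => -(d:ℂ) * (lam + ((bt x : ℝ):ℂ) / (2 * (Iρ:ℂ))))
        (fun y : ℝ => -(d:ℂ) * (lam * (y:ℂ) + ((B y : ℝ):ℂ) / (2 * (Iρ:ℂ))))
        (fun x _ => ((hG x).const_mul (-(d:ℂ))).hasDerivWithinAt)
        (by simp [hB0])
      intro x hx
      rw [hbteq x hx]
      exact hφ x hx
    have hrψ : ∀ x ∈ Icc (0:ℝ) l, ψ x = ψ 0 *
        Complex.exp ((d:ℂ) * (lam * (x:ℂ) + ((B x : ℝ):ℂ) / (2 * (Iρ:ℂ)))) := by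
      apply ode_rep_aux ψ (fun x => (d:ℂ) * (lam + ((bt x : ℝ):ℂ) / (2 * (Iρ:ℂ))))
        (fun y : ℝ => (d:ℂ) * (lam * (y:ℂ) + ((B y : ℝ):ℂ) / (2 * (Iρ:ℂ))))
        (fun x _ => ((hG x).const_mul ((d:ℂ))).hasDerivWithinAt)
        (by simp [hB0])
      intro x hx
      rw [hbteq x hx]
      exact hψ x hx
    -- nontriviality at 0
    have hq0 : q 0 = -p 0 := by linear_combination hbc0
    have hψ0 : ψ 0 = -φ 0 := by linear_combination hbc0'
    have hinit : p 0 ≠ 0 ∨ φ 0 ≠ 0 := by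
      by_contra h
      push_neg at h
      obtain ⟨h1, h2⟩ := h
      apply hnt
      intro x hx
      refine ⟨?_, ?_, ?_, ?_⟩
      · rw [hrp x hx, h1, zero_mul]
      · rw [hrφ x hx, h2, zero_mul]
      · rw [hrq x hx, hq0, h1, neg_zero, zero_mul]
      · rw [hrψ x hx, hψ0, h2, neg_zero, zero_mul]
    rcases hinit with hp0 | hφ0
    · -- wave part: λ = i k π √(K/ρ) / l
      left
      have hbl := hbcl
      rw [hrp l hlI, hrq l hlI, hq0] at hbl
      have heq : Complex.exp (-lam * (c:ℂ) * (l:ℂ)) = Complex.exp (lam * (c:ℂ) * (l:ℂ)) := by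
        have h2 : p 0 * (Complex.exp (-lam * (c:ℂ) * (l:ℂ))
            - Complex.exp (lam * (c:ℂ) * (l:ℂ))) = 0 := by linear_combination hbl
        rcases mul_eq_zero.1 h2 with h | h
        · exact absurd h hp0
        · exact sub_eq_zero.1 h
      obtain ⟨n, hn⟩ := Complex.exp_eq_exp_iff_exists_int.1 heq
      refine ⟨-n, ?_⟩
      rw [hcinv]
      push_cast
      linear_combination (-1/2 : ℂ) * ((l:ℝ):ℂ)⁻¹ * ((c:ℝ):ℂ)⁻¹ * hn
        - lam * ((c:ℝ):ℂ) * ((c:ℝ):ℂ)⁻¹ * hl' - lam * hc'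
    · -- beam part
      right
      have hbl := hbcl'
      rw [hrφ l hlI, hrψ l hlI, hψ0] at hbl
      have heq : Complex.exp (-(d:ℂ) * (lam * (l:ℂ) + ((B l : ℝ):ℂ) / (2 * (Iρ:ℂ))))
          = Complex.exp ((d:ℂ) * (lam * (l:ℂ) + ((B l : ℝ):ℂ) / (2 * (Iρ:ℂ)))) := by
        have h2 : φ 0 * (Complex.exp (-(d:ℂ) * (lam * (l:ℂ) + ((B l : ℝ):ℂ) / (2 * (Iρ:ℂ))))
            - Complex.exp ((d:ℂ) * (lam * (l:ℂ) + ((B l : ℝ):ℂ) / (2 * (Iρ:ℂ))))) = 0 := by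
          linear_combination hbl
        rcases mul_eq_zero.1 h2 with h | h
        · exact absurd h hφ0
        · exact sub_eq_zero.1 h
      obtain ⟨n, hn⟩ := Complex.exp_eq_exp_iff_exists_int.1 heq
      refine ⟨-n, ?_⟩
      rw [hInt, hdinv]
      push_cast
      linear_combination (-1/2 : ℂ) * ((d:ℝ):ℂ)⁻¹ * ((l:ℝ):ℂ)⁻¹ * hn
        - lam * ((d:ℝ):ℂ) * ((d:ℝ):ℂ)⁻¹ * hl'
        - (lam + ((B l : ℝ):ℂ) * (2:ℂ)⁻¹ * ((l:ℝ):ℂ)⁻¹ * ((Iρ:ℝ):ℂ)⁻¹) * hd'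
  · -- backward direction
    rintro (⟨k, hk⟩ | ⟨k, hk⟩)
    · -- wave eigenvalue: take p, q exponentials, φ = ψ = 0
      rw [hcinv] at hk
      have hE : lam * (c:ℂ) * (l:ℂ) = (k:ℂ) * (Real.pi:ℂ) * Complex.I := by
        rw [hk]
        push_cast
        linear_combination (k:ℂ) * (Real.pi:ℂ) * Complex.I * ((c:ℝ):ℂ) * ((c:ℝ):ℂ)⁻¹ * hl'
          + (k:ℂ) * (Real.pi:ℂ) * Complex.I * hc'
      refine ⟨fun x => Complex.exp (-lam * (c:ℂ) * (x:ℂ)),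
        fun _ => 0, fun x => -Complex.exp (lam * (c:ℂ) * (x:ℂ)), fun _ => 0,
        ?_, ?_, ?_, ?_, ?_, ?_, ?_, ?_, ?_⟩
      · intro x hx
        have h := (hAp x hx).cexp
        convert h using 1
        ring
      · intro x hx
        simpa using hasDerivWithinAt_const x (Icc (0:ℝ) l) (0:ℂ)
      · intro x hx
        have h := ((hAq x hx).cexp).neg
        refine h.congr_deriv ?_
        ring
      · intro x hx
        simpa using hasDerivWithinAt_const x (Icc (0:ℝ) l) (0:ℂ)
      · norm_num
      · have hexp : Complex.exp (-lam * (c:ℂ) * (l:ℂ))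
            = Complex.exp (lam * (c:ℂ) * (l:ℂ)) := by
          rw [Complex.exp_eq_exp_iff_exists_int]
          exact ⟨-k, by push_cast; linear_combination (-2:ℂ) * hE⟩
        beta_reduce
        rw [hexp]
        exact add_neg_cancel _
      · norm_num
      · norm_num
      · intro h
        exact Complex.exp_ne_zero _ (h 0 h0I).1
    · -- beam eigenvalue: take φ, ψ exponentials, p = q = 0
      rw [hdinv, hInt] at hk
      have hE2 : (d:ℂ) * (lam * (l:ℂ) + ((B l : ℝ):ℂ) / (2 * (Iρ:ℂ)))
          = (k:ℂ) * (Real.pi:ℂ) * Complex.I := by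
        rw [hk]
        push_cast
        linear_combination (-((d:ℝ):ℂ) * ((B l : ℝ):ℂ) * (2:ℂ)⁻¹ * ((Iρ:ℝ):ℂ)⁻¹
            + (k:ℂ) * (Real.pi:ℂ) * Complex.I * ((d:ℝ):ℂ) * ((d:ℝ):ℂ)⁻¹) * hl'
          + (k:ℂ) * (Real.pi:ℂ) * Complex.I * hd'
      refine ⟨fun _ => 0,
        fun x => Complex.exp (-(d:ℂ) * (lam * (x:ℂ) + ((B x : ℝ):ℂ) / (2 * (Iρ:ℂ)))),
        fun _ => 0,
        fun x => -Complex.exp ((d:ℂ) * (lam * (x:ℂ) + ((B x : ℝ):ℂ) / (2 * (Iρ:ℂ)))),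
        ?_, ?_, ?_, ?_, ?_, ?_, ?_, ?_, ?_⟩
      · intro x hx
        simpa using hasDerivWithinAt_const x (Icc (0:ℝ) l) (0:ℂ)
      · intro x hx
        have h := (((hG x).const_mul (-(d:ℂ))).hasDerivWithinAt (s := Icc (0:ℝ) l)).cexp
        rw [hbteq x hx] at h
        convert h using 1
        ring
      · intro x hx
        simpa using hasDerivWithinAt_const x (Icc (0:ℝ) l) (0:ℂ)
      · intro x hx
        have h := ((((hG x).const_mul ((d:ℂ))).hasDerivWithinAt (s := Icc (0:ℝ) l)).cexp).neg
        rw [hbteq x hx] at h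
        refine h.congr_deriv ?_
        ring
      · norm_num
      · norm_num
      · norm_num [hB0]
      · have hexp : Complex.exp (-(d:ℂ) * (lam * (l:ℂ) + ((B l : ℝ):ℂ) / (2 * (Iρ:ℂ))))
            = Complex.exp ((d:ℂ) * (lam * (l:ℂ) + ((B l : ℝ):ℂ) / (2 * (Iρ:ℂ)))) := by
          rw [Complex.exp_eq_exp_iff_exists_int]
          exact ⟨-k, by push_cast; linear_combination (-2:ℂ) * hE2⟩
        beta_reduce
        rw [hexp]
        exact add_neg_cancel _
      · intro h
        exact Complex.exp_ne_zero _ (h 0 h0I).2.1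
end
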